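/- arXiv:math/0404045 — 5 statements merged into one kernel-verified Lean document; each statement's English description precedes it below -/
import Mathlib

section
/- Let A be a random variable with 0 < A < ∞ almost surely. Then min_{0 ≤ x ≤ 1} E[A^x] = max_{0 < y ≤ 1} inf_{x ≥ 0} y^{1−x} E[A^x]; in particular the infimum of x ↦ E[A^x] over [0,1] is attained, the supremum over y ∈ (0,1] of inf_{x ≥ 0} y^{1−x} E[A^x] is attained, and the two values are equal. -/
open MeasureTheory
open scoped ENNReal

open Filter Topology



namespace LyonsPemantleAux

variable {Ω : Type*} [MeasurableSpace Ω] {μ : Measure Ω}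

/-- Log-convexity of `x ↦ ∫ B^x` via Hölder. -/
lemma lintegral_rpow_convex (hB : Measurable B) (hB0 : ∀ᵐ ω ∂μ, B ω ≠ 0)
    (hBt : ∀ ω, B ω ≠ ∞) {a b t : ℝ} (ht : 0 < t) (ht1 : t < 1) :
    (∫⁻ ω, B ω ^ (t * a + (1 - t) * b) ∂μ) ≤
      (∫⁻ ω, B ω ^ a ∂μ) ^ t * (∫⁻ ω, B ω ^ b ∂μ) ^ (1 - t) := by
  have h1t : (0:ℝ) < 1 - t := by linarith
  have hpq : (1/t).HolderConjugate (1/(1-t)) :=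
    ⟨by rw [one_div, one_div, inv_inv, inv_inv]; ring, by positivity, by positivity⟩
  have H := ENNReal.lintegral_mul_le_Lp_mul_Lq μ hpq
    (f := fun ω => B ω ^ (t * a)) (g := fun ω => B ω ^ ((1 - t) * b))
    (hB.pow_const _).aemeasurable (hB.pow_const _).aemeasurable
  have hL : (∫⁻ ω, B ω ^ (t * a + (1 - t) * b) ∂μ)
      = ∫⁻ ω, ((fun ω => B ω ^ (t * a)) * fun ω => B ω ^ ((1 - t) * b)) ω ∂μ := by
    refine lintegral_congr_ae (hB0.mono fun ω h0 => ?_)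
    simp only [Pi.mul_apply]
    rw [ENNReal.rpow_add _ _ h0 (hBt ω)]
  have hR1 : (∫⁻ ω, ((fun ω => B ω ^ (t * a)) ω) ^ (1/t) ∂μ) ^ (1/(1/t))
      = (∫⁻ ω, B ω ^ a ∂μ) ^ t := by
    rw [one_div_one_div]
    congr 1
    refine lintegral_congr fun ω => ?_
    rw [← ENNReal.rpow_mul]
    congr 1
    field_simp
  have hR2 : (∫⁻ ω, ((fun ω => B ω ^ ((1-t) * b)) ω) ^ (1/(1-t)) ∂μ) ^ (1/(1/(1-t)))
      = (∫⁻ ω, B ω ^ b ∂μ) ^ (1 - t) := by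
    rw [one_div_one_div]
    congr 1
    refine lintegral_congr fun ω => ?_
    rw [← ENNReal.rpow_mul]
    congr 1
    field_simp
  rw [hL]
  calc ∫⁻ ω, ((fun ω => B ω ^ (t * a)) * fun ω => B ω ^ ((1 - t) * b)) ω ∂μ
      ≤ (∫⁻ ω, ((fun ω => B ω ^ (t * a)) ω) ^ (1/t) ∂μ) ^ (1/(1/t)) *
        (∫⁻ ω, ((fun ω => B ω ^ ((1-t) * b)) ω) ^ (1/(1-t)) ∂μ) ^ (1/(1/(1-t))) := H
    _ = _ := by rw [hR1, hR2]

end LyonsPemantleAux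

namespace LyonsPemantleAux

variable {Ω : Type*} [MeasurableSpace Ω] {μ : Measure Ω}

lemma exists_min [IsProbabilityMeasure μ] {A : Ω → ℝ} (hA : Measurable A)
    (hApos : ∀ᵐ ω ∂μ, 0 < A ω) :
    ∃ x₀ ∈ Set.Icc (0:ℝ) 1, ∀ x ∈ Set.Icc (0:ℝ) 1,
      (∫⁻ ω, ENNReal.ofReal (A ω) ^ x₀ ∂μ) ≤ ∫⁻ ω, ENNReal.ofReal (A ω) ^ x ∂μ := by
  set F : ℝ → ℝ≥0∞ := fun x => ∫⁻ ω, ENNReal.ofReal (A ω) ^ x ∂μ with hFdef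
  set m : ℝ≥0∞ := ⨅ x ∈ Set.Icc (0:ℝ) 1, F x with hmdef
  have hF0 : F 0 = 1 := by simp [hFdef]
  have hm1 : m ≤ 1 := by
    refine le_trans ?_ hF0.le
    exact iInf₂_le 0 ⟨le_refl 0, zero_le_one⟩
  have hmtop : m ≠ ∞ := (hm1.trans_lt ENNReal.one_lt_top).ne
  have hseq : ∀ n : ℕ, ∃ x ∈ Set.Icc (0:ℝ) 1, F x < m + (n : ℝ≥0∞)⁻¹ := by
    intro n
    have hlt : m < m + (n : ℝ≥0∞)⁻¹ :=
      ENNReal.lt_add_right hmtop (by simp)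
    rw [hmdef] at hlt
    simpa using (by
      rw [iInf_lt_iff] at hlt
      obtain ⟨x, hx⟩ := hlt
      rw [iInf_lt_iff] at hx
      obtain ⟨hx1, hx2⟩ := hx
      exact ⟨x, hx1, hx2⟩ :
        ∃ x, x ∈ Set.Icc (0:ℝ) 1 ∧ F x < m + (n : ℝ≥0∞)⁻¹)
  choose u hu hu' using hseq
  obtain ⟨x₀, hx₀, φ, hφ, hφt⟩ := isCompact_Icc.tendsto_subseq hu
  refine ⟨x₀, hx₀, ?_⟩
  have hcont : ∀ ω, 0 < A ω →
      Tendsto (fun n => ENNReal.ofReal (A ω) ^ u (φ n)) atTop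
        (𝓝 (ENNReal.ofReal (A ω) ^ x₀)) := by
    intro ω hω
    have h1 : ∀ y : ℝ, ENNReal.ofReal (A ω) ^ y
        = ENNReal.ofReal (Real.exp (Real.log (A ω) * y)) := by
      intro y; rw [ENNReal.ofReal_rpow_of_pos hω, Real.rpow_def_of_pos hω]
    simp_rw [h1]
    exact (ENNReal.continuous_ofReal.tendsto _).comp
      ((Real.continuous_exp.tendsto _).comp (hφt.const_mul _))
  have key : F x₀ ≤ m := by
    have h1 : F x₀ = ∫⁻ ω, liminf (fun n => ENNReal.ofReal (A ω) ^ u (φ n)) atTop ∂μ := by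
      refine lintegral_congr_ae (hApos.mono fun ω hω => ?_)
      exact ((hcont ω hω).liminf_eq).symm
    have h2 : (∫⁻ ω, liminf (fun n => ENNReal.ofReal (A ω) ^ u (φ n)) atTop ∂μ)
        ≤ liminf (fun n => F (u (φ n))) atTop :=
      lintegral_liminf_le fun n => hA.ennreal_ofReal.pow_const _
    have h3 : liminf (fun n => F (u (φ n))) atTop ≤ m := by
      have hb : ∀ n, F (u (φ n)) ≤ m + (n : ℝ≥0∞)⁻¹ := by
        intro n
        refine (hu' (φ n)).le.trans (add_le_add_right ?_ m)
        exact ENNReal.inv_le_inv.2 (by exact_mod_cast hφ.le_apply)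
      refine le_trans (liminf_le_liminf (Eventually.of_forall hb)) ?_
      have ht : Tendsto (fun n : ℕ => m + (n : ℝ≥0∞)⁻¹) atTop (𝓝 m) := by
        have := Tendsto.const_add m ENNReal.tendsto_inv_nat_nhds_zero
        simpa using this
      exact ht.liminf_eq.le
    calc F x₀ = _ := h1
      _ ≤ _ := h2
      _ ≤ m := h3
  intro x hx
  exact key.trans (iInf₂_le x hx)

end LyonsPemantleAux


section MainProof

variable {Ω : Type*} [MeasurableSpace Ω] {μ : Measure Ω}

theorem min_expectation_rpow_eq_max_inf'
    [IsProbabilityMeasure μ]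
    (A : Ω → ℝ) (hA : Measurable A) (hApos : ∀ᵐ ω ∂μ, 0 < A ω) :
    ∃ x₀ ∈ Set.Icc (0 : ℝ) 1, ∃ y₀ ∈ Set.Ioc (0 : ℝ) 1,
      (∀ x ∈ Set.Icc (0 : ℝ) 1,
        (∫⁻ ω, ENNReal.ofReal (A ω ^ x₀) ∂μ) ≤ ∫⁻ ω, ENNReal.ofReal (A ω ^ x) ∂μ) ∧
      (∀ y ∈ Set.Ioc (0 : ℝ) 1,
        (⨅ x ∈ Set.Ici (0 : ℝ),
            ENNReal.ofReal (y ^ (1 - x)) * ∫⁻ ω, ENNReal.ofReal (A ω ^ x) ∂μ) ≤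
          ⨅ x ∈ Set.Ici (0 : ℝ),
            ENNReal.ofReal (y₀ ^ (1 - x)) * ∫⁻ ω, ENNReal.ofReal (A ω ^ x) ∂μ) ∧
      (∫⁻ ω, ENNReal.ofReal (A ω ^ x₀) ∂μ) =
        ⨅ x ∈ Set.Ici (0 : ℝ),
          ENNReal.ofReal (y₀ ^ (1 - x)) * ∫⁻ ω, ENNReal.ofReal (A ω ^ x) ∂μ := by
  have hBmeas : Measurable fun ω => ENNReal.ofReal (A ω) := hA.ennreal_ofReal
  have hB0 : ∀ᵐ ω ∂μ, ENNReal.ofReal (A ω) ≠ 0 := hApos.mono fun ω h => by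
    simp [ENNReal.ofReal_eq_zero, not_le, h]
  have hBt : ∀ ω, ENNReal.ofReal (A ω) ≠ ∞ := fun ω => ENNReal.ofReal_ne_top
  set F : ℝ → ℝ≥0∞ := fun x => ∫⁻ ω, ENNReal.ofReal (A ω) ^ x ∂μ with hFdef
  have hFeq : ∀ x : ℝ, (∫⁻ ω, ENNReal.ofReal (A ω ^ x) ∂μ) = F x := fun x =>
    lintegral_congr_ae (hApos.mono fun ω h => by
      show ENNReal.ofReal (A ω ^ x) = ENNReal.ofReal (A ω) ^ x
      exact (ENNReal.ofReal_rpow_of_pos h).symm)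
  have hF0 : F 0 = 1 := by simp [hFdef]
  have hFpos : ∀ x, F x ≠ 0 := by
    intro x hx
    have h0 := (lintegral_eq_zero_iff (hBmeas.pow_const x)).1 hx
    obtain ⟨ω, h1, h2⟩ := (hB0.and h0).exists
    rw [Pi.zero_apply] at h2
    rcases ENNReal.rpow_eq_zero_iff.1 h2 with ⟨h3, _⟩ | ⟨h3, _⟩
    · exact h1 h3
    · exact hBt ω h3
  have hconv : ∀ {a b t : ℝ}, 0 < t → t < 1 →
      F (t * a + (1 - t) * b) ≤ F a ^ t * F b ^ (1 - t) := fun {a b t} ht ht1 =>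
    LyonsPemantleAux.lintegral_rpow_convex hBmeas hB0 hBt ht ht1
  have h3pt : ∀ u x : ℝ, u < 1 → 1 < x →
      F 1 ≤ F x ^ ((1 - u) / (x - u)) * F u ^ (1 - (1 - u) / (x - u)) := by
    intro u x hu hx
    have hxu : 0 < x - u := by linarith
    have ht0 : 0 < (1 - u) / (x - u) := div_pos (by linarith) hxu
    have ht1 : (1 - u) / (x - u) < 1 := (div_lt_one hxu).2 (by linarith)
    have h := hconv (a := x) (b := u) ht0 ht1
    have he : (1 - u) / (x - u) * x + (1 - (1 - u) / (x - u)) * u = 1 := by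
      field_simp
      ring
    rwa [he] at h
  obtain ⟨x₁, hx₁Icc, hx₁min⟩ := LyonsPemantleAux.exists_min hA hApos
  replace hx₁min : ∀ x ∈ Set.Icc (0:ℝ) 1, F x₁ ≤ F x := hx₁min
  have hFx₁top : F x₁ ≠ ∞ := by
    refine ((hx₁min 0 ⟨le_rfl, zero_le_one⟩).trans_lt ?_).ne
    rw [hF0]; exact ENNReal.one_lt_top
  -- The key: find (x₀, y₀) with the min property, the key inequality, and y₀^(1-x₀) = 1
  suffices H : ∃ x₀ ∈ Set.Icc (0:ℝ) 1, ∃ y₀ ∈ Set.Ioc (0:ℝ) 1,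
      (∀ x ∈ Set.Icc (0:ℝ) 1, F x₀ ≤ F x) ∧
      (∀ x ∈ Set.Ici (0:ℝ), F x₀ ≤ ENNReal.ofReal (y₀ ^ (1 - x)) * F x) ∧
      ENNReal.ofReal (y₀ ^ (1 - x₀)) = 1 by
    obtain ⟨x₀, hx₀, y₀, hy₀, hmin, hkey, hunit⟩ := H
    simp only [hFeq]
    have heq : F x₀ = ⨅ x ∈ Set.Ici (0:ℝ), ENNReal.ofReal (y₀ ^ (1 - x)) * F x := by
      refine le_antisymm (le_iInf₂ hkey) ?_
      refine (iInf₂_le x₀ hx₀.1).trans ?_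
      rw [hunit, one_mul]
    refine ⟨x₀, hx₀, y₀, hy₀, hmin, ?_, heq⟩
    intro y hy
    rw [← heq]
    refine (iInf₂_le x₀ hx₀.1).trans ?_
    have h1 : y ^ (1 - x₀) ≤ 1 :=
      Real.rpow_le_one hy.1.le hy.2 (by linarith [hx₀.2])
    calc ENNReal.ofReal (y ^ (1 - x₀)) * F x₀ ≤ 1 * F x₀ :=
          mul_le_mul_left (ENNReal.ofReal_le_one.2 h1) _
      _ = F x₀ := one_mul _
  -- Case analysis on whether the minimizer is < 1 or = 1
  rcases lt_or_eq_of_le hx₁Icc.2 with hlt | heq1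
  · -- Case I : minimizer x₁ < 1, take y₀ = 1
    refine ⟨x₁, hx₁Icc, 1, ⟨zero_lt_one, le_rfl⟩, hx₁min, ?_, by simp⟩
    intro x hx
    rw [Real.one_rpow, ENNReal.ofReal_one, one_mul]
    rcases le_or_gt x 1 with hx1 | hx1
    · exact hx₁min x ⟨hx, hx1⟩
    · -- x > 1 : three-point argument
      set t : ℝ := (1 - x₁) / (x - x₁) with htdef
      have hxu : 0 < x - x₁ := by linarith
      have ht0 : 0 < t := div_pos (by linarith) hxu
      have ht1 : t < 1 := (div_lt_one hxu).2 (by linarith)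
      have h3 := h3pt x₁ x hlt hx1
      have hF1 : F x₁ ≤ F 1 := hx₁min 1 ⟨zero_le_one, le_rfl⟩
      have hsplit : F x₁ = F x₁ ^ t * F x₁ ^ (1 - t) := by
        rw [← ENNReal.rpow_add t (1 - t) (hFpos x₁) hFx₁top]
        norm_num
      have hchain : F x₁ ^ t * F x₁ ^ (1 - t) ≤ F x ^ t * F x₁ ^ (1 - t) :=
        hsplit ▸ (hF1.trans h3)
      have hne0 : F x₁ ^ (1 - t) ≠ 0 :=
        (ENNReal.rpow_pos (hFpos x₁).bot_lt hFx₁top).ne'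
      have hnetop : F x₁ ^ (1 - t) ≠ ∞ :=
        ENNReal.rpow_ne_top_of_nonneg (by linarith) hFx₁top
      have := (ENNReal.mul_le_mul_iff_left hne0 hnetop).1 hchain
      exact (ENNReal.rpow_le_rpow_iff ht0).1 this
  · -- Case II : the minimum is at x₁ = 1
    subst heq1
    have hmin1 : ∀ x ∈ Set.Icc (0:ℝ) 1, F 1 ≤ F x := hx₁min
    have hF1le : F 1 ≤ 1 := by
      have := hmin1 0 ⟨le_rfl, zero_le_one⟩
      rwa [hF0] at this
    have hFle1 : ∀ x ∈ Set.Icc (0:ℝ) 1, F x ≤ 1 := by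
      rintro x ⟨hx0, hx1⟩
      rcases eq_or_lt_of_le hx0 with h | h
      · rw [← h, hF0]
      rcases eq_or_lt_of_le hx1 with h' | h'
      · rw [h']; exact hF1le
      have hc := hconv (a := 1) (b := 0) h h'
      have he : x * 1 + (1 - x) * 0 = x := by ring
      rw [he, hF0] at hc
      calc F x ≤ F 1 ^ x * 1 ^ (1 - x) := hc
        _ ≤ 1 ^ x * 1 ^ (1 - x) :=
            mul_le_mul_left (ENNReal.rpow_le_rpow hF1le h.le) _
        _ = 1 := by simp
    have hFtop : ∀ x ∈ Set.Icc (0:ℝ) 1, F x ≠ ∞ := fun x hx =>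
      ((hFle1 x hx).trans_lt ENNReal.one_lt_top).ne
    set G : ℝ → ℝ := fun x => Real.log (F x).toReal with hGdef
    have hFG : ∀ x, F x ≠ ∞ → F x = ENNReal.ofReal (Real.exp (G x)) := by
      intro x hx
      rw [hGdef]
      rw [Real.exp_log (ENNReal.toReal_pos (hFpos x) hx), ENNReal.ofReal_toReal hx]
    have hG1le : ∀ u ∈ Set.Icc (0:ℝ) 1, G 1 ≤ G u := by
      intro u hu
      refine Real.log_le_log (ENNReal.toReal_pos (hFpos 1) (hFtop 1 ⟨zero_le_one, le_rfl⟩)) ?_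
      exact (ENNReal.toReal_le_toReal (hFtop 1 ⟨zero_le_one, le_rfl⟩) (hFtop u hu)).2
        (hmin1 u hu)
    set S : Set ℝ := (fun u => (G 1 - G u) / (1 - u)) '' Set.Ico (0:ℝ) 1 with hSdef
    have hSne : S.Nonempty := ⟨_, ⟨0, ⟨le_rfl, zero_lt_one⟩, rfl⟩⟩
    have hSub : ∀ v ∈ S, v ≤ 0 := by
      rintro v ⟨u, ⟨hu0, hu1⟩, rfl⟩
      refine div_nonpos_of_nonpos_of_nonneg ?_ (by linarith)
      have := hG1le u ⟨hu0, hu1.le⟩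
      linarith
    have hbdd : BddAbove S := ⟨0, hSub⟩
    set s : ℝ := sSup S with hsdef
    have hs0 : s ≤ 0 := csSup_le hSne hSub
    have hy₀mem : Real.exp s ∈ Set.Ioc (0:ℝ) 1 :=
      ⟨Real.exp_pos s, Real.exp_le_one_iff.2 hs0⟩
    have hy₀pow : ∀ r : ℝ, Real.exp s ^ r = Real.exp (s * r) := fun r => by
      rw [Real.rpow_def_of_pos (Real.exp_pos s), Real.log_exp]
    have hF1top : F 1 ≠ ∞ := hFtop 1 ⟨zero_le_one, le_rfl⟩
    have hstep : ∀ x : ℝ, F x ≠ ∞ → G 1 ≤ s * (1 - x) + G x →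
        F 1 ≤ ENNReal.ofReal (Real.exp s ^ (1 - x)) * F x := by
      intro x hxt hG
      rw [hFG 1 hF1top, hFG x hxt, hy₀pow,
        ← ENNReal.ofReal_mul (Real.exp_pos _).le, ← Real.exp_add]
      exact ENNReal.ofReal_le_ofReal (Real.exp_le_exp.2 hG)
    refine ⟨1, ⟨zero_le_one, le_rfl⟩, Real.exp s, hy₀mem, hmin1, ?_, by simp⟩
    intro x hx0
    rcases lt_trichotomy x 1 with hlt | heq | hgt
    · have hmem : (G 1 - G x) / (1 - x) ∈ S := ⟨x, ⟨hx0, hlt⟩, rfl⟩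
      have hle := le_csSup hbdd hmem
      have h1x : (0:ℝ) < 1 - x := by linarith
      refine hstep x (hFtop x ⟨hx0, hlt.le⟩) ?_
      rw [div_le_iff₀ h1x] at hle
      linarith
    · subst heq
      exact hstep 1 hF1top (by simp)
    · by_cases hxt : F x = ∞
      · rw [hxt, ENNReal.mul_top]
        · exact le_top
        · simp only [ne_eq, ENNReal.ofReal_eq_zero, not_le]
          exact Real.rpow_pos_of_pos (Real.exp_pos s) _
      · refine hstep x hxt ?_
        have hsle : s ≤ (G x - G 1) / (x - 1) := by
          refine csSup_le hSne ?_
          rintro v ⟨u, ⟨hu0, hu1⟩, rfl⟩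
          have hxu : 0 < x - u := by linarith
          have h3 := h3pt u x hu1 hgt
          set t : ℝ := (1 - u) / (x - u) with htdef
          have ht0 : 0 < t := div_pos (by linarith) hxu
          have ht1 : t < 1 := (div_lt_one hxu).2 (by linarith)
          have hFu : F u ≠ ∞ := hFtop u ⟨hu0, hu1.le⟩
          have hprod_ne : F x ^ t * F u ^ (1 - t) ≠ ∞ :=
            ENNReal.mul_ne_top (ENNReal.rpow_ne_top_of_nonneg ht0.le hxt)
              (ENNReal.rpow_ne_top_of_nonneg (by linarith) hFu)
          have hr := (ENNReal.toReal_le_toReal hF1top hprod_ne).2 h3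
          rw [ENNReal.toReal_mul, ← ENNReal.toReal_rpow, ← ENNReal.toReal_rpow] at hr
          have hx_pos : 0 < (F x).toReal := ENNReal.toReal_pos (hFpos x) hxt
          have hu_pos : 0 < (F u).toReal := ENNReal.toReal_pos (hFpos u) hFu
          have h1_pos : 0 < (F 1).toReal := ENNReal.toReal_pos (hFpos 1) hF1top
          have hlog := Real.log_le_log h1_pos hr
          rw [Real.log_mul (ne_of_gt (Real.rpow_pos_of_pos hx_pos t))
              (ne_of_gt (Real.rpow_pos_of_pos hu_pos (1 - t))),
            Real.log_rpow hx_pos, Real.log_rpow hu_pos] at hlog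
          -- hlog : G 1 ≤ t * G x + (1 - t) * G u
          have hlog' : G 1 ≤ t * G x + (1 - t) * G u := hlog
          rw [div_le_div_iff₀ (by linarith) (by linarith : (0:ℝ) < x - 1)]
          have ht' : t * (x - u) = 1 - u := by rw [htdef]; field_simp
          have ht'' : (1 - t) * (x - u) = x - 1 := by rw [htdef]; field_simp; ring
          have hmul := mul_le_mul_of_nonneg_right hlog' hxu.le
          have hexp : (t * G x + (1 - t) * G u) * (x - u)
              = (1 - u) * G x + (x - 1) * G u := by
            have h9 : (t * G x + (1 - t) * G u) * (x - u)
                = (t * (x - u)) * G x + ((1 - t) * (x - u)) * G u := by ring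
            rw [h9, ht', ht'']
          rw [hexp] at hmul
          linarith
        rw [le_div_iff₀ (by linarith : (0:ℝ) < x - 1)] at hsle
        linarith

end MainProof

/-- **Lemma (Lyons–Pemantle).** For a random variable `A` with `0 < A < ∞` a.s.
(expectations `E[A^x]` taken in `[0,∞]`),
`min_{0 ≤ x ≤ 1} E[A^x] = max_{0 < y ≤ 1} inf_{x ≥ 0} y^{1-x} E[A^x]`:
the minimum over `[0,1]` is attained at some `x₀`, the maximum over `(0,1]` is attained
at some `y₀`, and the two values are equal. -/
theorem min_expectation_rpow_eq_max_inf
    {Ω : Type*} [MeasurableSpace Ω] (μ : Measure Ω) [IsProbabilityMeasure μ]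
    (A : Ω → ℝ) (hA : Measurable A) (hApos : ∀ᵐ ω ∂μ, 0 < A ω) :
    ∃ x₀ ∈ Set.Icc (0 : ℝ) 1, ∃ y₀ ∈ Set.Ioc (0 : ℝ) 1,
      (∀ x ∈ Set.Icc (0 : ℝ) 1,
        (∫⁻ ω, ENNReal.ofReal (A ω ^ x₀) ∂μ) ≤ ∫⁻ ω, ENNReal.ofReal (A ω ^ x) ∂μ) ∧
      (∀ y ∈ Set.Ioc (0 : ℝ) 1,
        (⨅ x ∈ Set.Ici (0 : ℝ),
            ENNReal.ofReal (y ^ (1 - x)) * ∫⁻ ω, ENNReal.ofReal (A ω ^ x) ∂μ) ≤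
          ⨅ x ∈ Set.Ici (0 : ℝ),
            ENNReal.ofReal (y₀ ^ (1 - x)) * ∫⁻ ω, ENNReal.ofReal (A ω ^ x) ∂μ) ∧
      (∫⁻ ω, ENNReal.ofReal (A ω ^ x₀) ∂μ) =
        ⨅ x ∈ Set.Ici (0 : ℝ),
          ENNReal.ofReal (y₀ ^ (1 - x)) * ∫⁻ ω, ENNReal.ofReal (A ω ^ x) ∂μ := by
  exact min_expectation_rpow_eq_max_inf' A hA hApos
end

section
/- For every a ∈ ℝ and every n ≥ 1, (1/n) · log P[S_n ≥ n·a] ≤ γ(a); that is, P[S_n ≥ n·a] ≤ e^{n·γ(a)} (interpreted in the extended reals when γ(a) = −∞). -/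
open MeasureTheory ProbabilityTheory Filter
open scoped ENNReal

private lemma chernoff_prod_aux {Ω : Type*} [MeasurableSpace Ω] (μ : Measure Ω)
    [IsProbabilityMeasure μ]
    (X : Ω → ℝ) (hX : Measurable X)
    (Xs : ℕ → Ω → ℝ) (hXs : ∀ i, Measurable (Xs i))
    (hid : ∀ i, IdentDistrib (Xs i) X μ μ)
    (hind : iIndepFun Xs μ) (θ : ℝ) (m : ℕ) :
    ∫⁻ ω, ENNReal.ofReal (Real.exp (θ * ∑ i ∈ Finset.range m, Xs i ω)) ∂μ
      = (∫⁻ ω, ENNReal.ofReal (Real.exp (θ * X ω)) ∂μ) ^ m := by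
  have hu : Measurable (fun x : ℝ => ENNReal.ofReal (Real.exp (θ * x))) :=
    ENNReal.measurable_ofReal.comp (Real.measurable_exp.comp (measurable_const_mul θ))
  induction m with
  | zero => simp
  | succ m ih =>
    have hS : Measurable (fun ω => ∑ i ∈ Finset.range m, Xs i ω) :=
      Finset.measurable_sum _ fun i _ => hXs i
    have hindep : IndepFun (∑ j ∈ Finset.range m, Xs j) (Xs m) μ :=
      hind.indepFun_sum_range_succ hXs m
    have hindep' : IndepFun
        ((fun x : ℝ => ENNReal.ofReal (Real.exp (θ * x))) ∘ (∑ j ∈ Finset.range m, Xs j))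
        ((fun x : ℝ => ENNReal.ofReal (Real.exp (θ * x))) ∘ (Xs m)) μ :=
      hindep.comp hu hu
    have hmul := lintegral_mul_eq_lintegral_mul_lintegral_of_indepFun''
      (f := (fun x : ℝ => ENNReal.ofReal (Real.exp (θ * x))) ∘ (∑ j ∈ Finset.range m, Xs j))
      (g := (fun x : ℝ => ENNReal.ofReal (Real.exp (θ * x))) ∘ (Xs m))
      ((hu.comp (by rw [show (∑ j ∈ Finset.range m, Xs j) = fun ω => ∑ j ∈ Finset.range m, Xs j ω from by ext ω; simp]; exact hS)).aemeasurable) ((hu.comp (hXs m)).aemeasurable) hindep'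
    have hlast : ∫⁻ ω, ENNReal.ofReal (Real.exp (θ * Xs m ω)) ∂μ
        = ∫⁻ ω, ENNReal.ofReal (Real.exp (θ * X ω)) ∂μ :=
      ((hid m).comp hu).lintegral_eq
    calc ∫⁻ ω, ENNReal.ofReal (Real.exp (θ * ∑ i ∈ Finset.range (m + 1), Xs i ω)) ∂μ
        = ∫⁻ ω, ENNReal.ofReal (Real.exp (θ * ∑ i ∈ Finset.range m, Xs i ω))
            * ENNReal.ofReal (Real.exp (θ * Xs m ω)) ∂μ := by
          apply lintegral_congr
          intro ω
          rw [Finset.sum_range_succ, mul_add, Real.exp_add,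
            ENNReal.ofReal_mul (Real.exp_nonneg _)]
      _ = (∫⁻ ω, ENNReal.ofReal (Real.exp (θ * ∑ i ∈ Finset.range m, Xs i ω)) ∂μ)
            * ∫⁻ ω, ENNReal.ofReal (Real.exp (θ * Xs m ω)) ∂μ := by
          simpa [Function.comp, Finset.sum_apply] using hmul
      _ = (∫⁻ ω, ENNReal.ofReal (Real.exp (θ * X ω)) ∂μ) ^ (m + 1) := by
          rw [ih, hlast, pow_succ]

/-- **Chernoff–Cramér upper bound.** Let `X` be a real-valued random variable (no
integrability assumed), `φ(θ) := E[e^{θX}] ∈ [0,∞]`,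
`γ(a) := inf_{θ ≥ 0} (-aθ + log φ(θ)) ∈ [-∞,∞]`, and let `S n` be the sum of `n`
independent copies of `X`.  Then for every `a ∈ ℝ` and `n ≥ 1`,
`(1/n) log P[S_n ≥ n a] ≤ γ(a)`, i.e. `log P[S_n ≥ n a] ≤ n γ(a)` in the extended reals. -/
theorem chernoff_cramer_upper_bound
    {Ω : Type*} [MeasurableSpace Ω] (μ : Measure Ω) [IsProbabilityMeasure μ]
    (X : Ω → ℝ) (hX : Measurable X)
    (Xs : ℕ → Ω → ℝ) (hXs : ∀ i, Measurable (Xs i))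
    (hid : ∀ i, IdentDistrib (Xs i) X μ μ)
    (hind : iIndepFun Xs μ)
    (a : ℝ) (n : ℕ) (hn : 1 ≤ n) :
    ENNReal.log (μ {ω | (n : ℝ) * a ≤ ∑ i ∈ Finset.range n, Xs i ω}) ≤
      ((n : ℝ) : EReal) *
        ⨅ θ ∈ Set.Ici (0 : ℝ),
          (((-(a * θ) : ℝ) : EReal) +
            ENNReal.log (∫⁻ ω, ENNReal.ofReal (Real.exp (θ * X ω)) ∂μ)) := by
  have hnpos : (0 : EReal) < ((n : ℝ) : EReal) := by
    exact_mod_cast (by exact_mod_cast hn : (0:ℝ) < (n:ℝ))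
  have hnne : ((n : ℝ) : EReal) ≠ ⊤ := EReal.coe_ne_top _
  rw [← EReal.div_le_iff_le_mul hnpos hnne]
  refine le_iInf₂ fun θ hθ => ?_
  rw [EReal.div_le_iff_le_mul hnpos hnne]
  have hθ0 : (0:ℝ) ≤ θ := hθ
  set φ : ℝ≥0∞ := ∫⁻ ω, ENNReal.ofReal (Real.exp (θ * X ω)) ∂μ with hφ
  -- key measure bound
  have hu : Measurable (fun x : ℝ => ENNReal.ofReal (Real.exp (θ * x))) :=
    ENNReal.measurable_ofReal.comp (Real.measurable_exp.comp (measurable_const_mul θ))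
  have hS : Measurable (fun ω => ∑ i ∈ Finset.range n, Xs i ω) :=
    Finset.measurable_sum _ fun i _ => hXs i
  have hεpos : (0:ℝ) < Real.exp (θ * ((n:ℝ) * a)) := Real.exp_pos _
  have hmarkov : μ {ω | (n : ℝ) * a ≤ ∑ i ∈ Finset.range n, Xs i ω}
      ≤ (∫⁻ ω, ENNReal.ofReal (Real.exp (θ * ∑ i ∈ Finset.range n, Xs i ω)) ∂μ)
        / ENNReal.ofReal (Real.exp (θ * ((n:ℝ) * a))) := by
    refine le_trans (measure_mono ?_) (meas_ge_le_lintegral_div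
      (hu.comp hS).aemeasurable (ENNReal.ofReal_pos.2 hεpos).ne' ENNReal.ofReal_ne_top)
    intro ω hω
    exact ENNReal.ofReal_le_ofReal (Real.exp_le_exp.2
      (mul_le_mul_of_nonneg_left hω hθ0))
  have hkey : μ {ω | (n : ℝ) * a ≤ ∑ i ∈ Finset.range n, Xs i ω}
      ≤ (ENNReal.ofReal (Real.exp (-(a * θ))) * φ) ^ n := by
    refine hmarkov.trans_eq ?_
    rw [chernoff_prod_aux μ X hX Xs hXs hid hind θ n, div_eq_mul_inv,
      ← ENNReal.ofReal_inv_of_pos hεpos, ← Real.exp_neg, mul_pow, mul_comm]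
    congr 1
    rw [← ENNReal.ofReal_pow (Real.exp_nonneg _), ← Real.exp_nat_mul]
    congr 1
    ring
  calc ENNReal.log (μ {ω | (n : ℝ) * a ≤ ∑ i ∈ Finset.range n, Xs i ω})
      ≤ ENNReal.log ((ENNReal.ofReal (Real.exp (-(a * θ))) * φ) ^ n) :=
        ENNReal.log_monotone hkey
    _ = ((n : ℝ) : EReal) * (((-(a * θ) : ℝ) : EReal) + ENNReal.log φ) := by
        rw [ENNReal.log_pow, ENNReal.log_mul_add,
          ENNReal.log_ofReal_of_pos (Real.exp_pos _), Real.log_exp,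
          EReal.coe_coe_eq_natCast]
end

section
/- If Σ_{σ ∈ T, σ ≠ root} p^{|σ|} < ∞, then almost surely Σ_{σ ∈ T, σ ≠ root} C_σ < ∞. -/
open MeasureTheory ProbabilityTheory Filter
open scoped ENNReal NNReal

/-- An infinite, locally finite rooted tree, modeled as a set of finite sequences of
natural numbers: it contains the empty sequence (the root), is closed under taking
prefixes, is infinite, and every vertex has only finitely many one-step extensions. -/
structure LFTree : Type where
  carrier : Set (List ℕ)
  root_mem : [] ∈ carrier
  prefix_closed : ∀ ⦃σ : List ℕ⦄, σ ∈ carrier → ∀ ⦃τ : List ℕ⦄, τ <+: σ → τ ∈ carrier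
  infinite : carrier.Infinite
  locallyFinite : ∀ σ ∈ carrier, {n : ℕ | σ ++ [n] ∈ carrier}.Finite

namespace LFTree

/-- The length-`n` initial prefix of an infinite sequence. -/
def pref (s : ℕ → ℕ) (n : ℕ) : List ℕ :=
  List.ofFn fun i : Fin n => s i

/-- A ray of `T`: an infinite sequence of natural numbers all of whose finite
prefixes lie in `T`. -/
def IsRay (T : LFTree) (s : ℕ → ℕ) : Prop :=
  ∀ n : ℕ, pref s n ∈ T.carrier

/-- A cutset: a finite set of non-root vertices of `T` such that every ray has a
prefix in it, and no element is a (proper) prefix of another. -/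
def IsCutset (T : LFTree) (c : Finset (List ℕ)) : Prop :=
  (∀ σ ∈ c, σ ∈ T.carrier ∧ σ ≠ []) ∧
  (∀ s : ℕ → ℕ, T.IsRay s → ∃ σ ∈ c, ∃ n : ℕ, σ = pref s n) ∧
  (∀ σ ∈ c, ∀ τ ∈ c, σ <+: τ → σ = τ)

/-- The branching number of `T`:
`br T = inf {λ > 0 : inf over cutsets Π of Σ_{σ ∈ Π} λ^{-|σ|} = 0}`. -/
noncomputable def br (T : LFTree) : ℝ :=
  sInf {l : ℝ | 0 < l ∧ ∀ ε : ℝ, 0 < ε →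
    ∃ c : Finset (List ℕ), T.IsCutset c ∧ ∑ σ ∈ c, l ^ (-(σ.length : ℤ)) < ε}

/-- The set of non-root vertices of `T`, as a type. -/
def Vertex (T : LFTree) : Type :=
  {σ : List ℕ // σ ∈ T.carrier ∧ σ ≠ []}

/-- A flow on `T`: a nonnegative function on the non-root vertices (modeled as a
function on all finite sequences) satisfying the conservation law
`θ(σ) = Σ_{τ a child of σ in T} θ(τ)` at every non-root vertex `σ` of `T`. -/
def IsFlow (T : LFTree) (θ : List ℕ → ℝ) : Prop :=
  (∀ σ : List ℕ, σ ∈ T.carrier → σ ≠ [] → 0 ≤ θ σ) ∧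
  (∀ σ : List ℕ, σ ∈ T.carrier → σ ≠ [] →
    θ σ = ∑' n : {n : ℕ // σ ++ [n] ∈ T.carrier}, θ (σ ++ [n.1]))

/-- A flow is nonzero when the total flow out of the root is positive. -/
def FlowNonzero (T : LFTree) (θ : List ℕ → ℝ) : Prop :=
  0 < ∑' n : {n : ℕ // [n] ∈ T.carrier}, θ [n.1]

end LFTree

/-- `cumul Aσ σ ω = ∏_{0 < τ ≤ σ} A_τ(ω)`, the product of the values `A_τ`
over the non-root prefixes `τ` of `σ`. -/
noncomputable def cumul {Ω : Type*} (Aσ : List ℕ → Ω → ℝ) (σ : List ℕ) (ω : Ω) : ℝ :=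
  ∏ i ∈ Finset.range σ.length, Aσ (σ.take (i + 1)) ω

/-- `p = min_{0 ≤ x ≤ 1} E[A^x]`, the expectations taken in `[0,∞]`. -/
noncomputable def pval {Ω : Type*} [MeasurableSpace Ω] (μ : Measure Ω) (A : Ω → ℝ) : ℝ≥0∞ :=
  ⨅ x ∈ Set.Icc (0 : ℝ) 1, ∫⁻ ω, ENNReal.ofReal (A ω ^ x) ∂μ


private lemma lintegral_prod_of_indep {ι Ω : Type*} [MeasurableSpace Ω] {μ : Measure Ω}
    [IsProbabilityMeasure μ] {g : ι → Ω → ℝ≥0∞} (hg : ∀ i, Measurable (g i))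
    (hind : iIndepFun g μ) (s : Finset ι) :
    ∫⁻ ω, ∏ i ∈ s, g i ω ∂μ = ∏ i ∈ s, ∫⁻ ω, g i ω ∂μ := by
  classical
  induction s using Finset.cons_induction with
  | empty => simp
  | cons i s hi ih =>
    rw [Finset.prod_cons]
    have hident : IndepFun (∏ j ∈ s, g j) (g i) μ :=
      hind.indepFun_finsetProd_of_notMem hg hi
    have hprodmeas : Measurable (∏ j ∈ s, g j) := by
      have := Finset.measurable_prod s (fun j (_ : j ∈ s) => hg j)
      simpa [Finset.prod_fn] using this
    have := lintegral_mul_eq_lintegral_mul_lintegral_of_indepFun hprodmeas (hg i) hident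
    simp only [Finset.prod_cons]
    calc ∫⁻ ω, g i ω * ∏ j ∈ s, g j ω ∂μ
        = ∫⁻ ω, (∏ j ∈ s, g j) ω * g i ω ∂μ := by
          congr 1; ext ω; simp [mul_comm]
      _ = (∫⁻ ω, (∏ j ∈ s, g j) ω ∂μ) * ∫⁻ ω, g i ω ∂μ := this
      _ = (∫⁻ ω, g i ω ∂μ) * ∏ j ∈ s, ∫⁻ ω, g j ω ∂μ := by
          rw [mul_comm]; congr 1
          rw [← ih]; congr 1; ext ω; simp

private lemma exists_attains_pval {Ω : Type*} [MeasurableSpace Ω] (μ : Measure Ω)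
    [IsProbabilityMeasure μ] (A : Ω → ℝ) (hA : Measurable A) (hApos : ∀ᵐ ω ∂μ, 0 < A ω) :
    ∃ x ∈ Set.Icc (0 : ℝ) 1, ∫⁻ ω, ENNReal.ofReal (A ω ^ x) ∂μ = pval μ A := by
  set f : ℝ → ℝ≥0∞ := fun x => ∫⁻ ω, ENNReal.ofReal (A ω ^ x) ∂μ with hf
  set p : ℝ≥0∞ := pval μ A with hp
  have hple : p ≤ 1 := by
    have h0 : f 0 = 1 := by
      simp only [hf, Real.rpow_zero, ENNReal.ofReal_one, lintegral_one, measure_univ]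
    calc p ≤ f 0 := iInf₂_le (0 : ℝ) (by simp)
    _ = 1 := h0
  have hpne : p ≠ ∞ := (hple.trans_lt (by norm_num)).ne
  -- choose approximating sequence
  have hseq : ∀ n : ℕ, ∃ x ∈ Set.Icc (0:ℝ) 1, f x < p + ((n : ℝ≥0∞) + 1)⁻¹ := by
    intro n
    by_contra hcon
    push_neg at hcon
    have : p + ((n : ℝ≥0∞) + 1)⁻¹ ≤ p := le_iInf₂ hcon
    have hlt : p < p + ((n : ℝ≥0∞) + 1)⁻¹ :=
      ENNReal.lt_add_right hpne (by simp)
    exact absurd (hlt.trans_le this) (lt_irrefl _)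
  choose x hxmem hxlt using hseq
  obtain ⟨x₀, hx₀mem, φ, hφmono, hφtendsto⟩ :=
    (isCompact_Icc (a := (0:ℝ)) (b := 1)).tendsto_subseq hxmem
  refine ⟨x₀, hx₀mem, le_antisymm ?_ (iInf₂_le x₀ hx₀mem)⟩
  -- Fatou
  have hmeask : ∀ k : ℕ, Measurable fun ω => ENNReal.ofReal (A ω ^ x (φ k)) := by
    intro k
    have hcont : Continuous fun y : ℝ => ENNReal.ofReal (y ^ x (φ k)) :=
      ENNReal.continuous_ofReal.comp (Real.continuous_rpow_const (hxmem (φ k)).1)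
    exact hcont.measurable.comp hA
  have key : f x₀ ≤ liminf (fun k => f (x (φ k))) atTop := by
    have hae : ∀ᵐ ω ∂μ, ENNReal.ofReal (A ω ^ x₀)
        = liminf (fun k => ENNReal.ofReal (A ω ^ x (φ k))) atTop := by
      filter_upwards [hApos] with ω hω
      have hc : Continuous fun t : ℝ => ENNReal.ofReal (A ω ^ t) := by
        have : (fun t : ℝ => A ω ^ t) = fun t => Real.exp (Real.log (A ω) * t) := by
          ext t; rw [Real.rpow_def_of_pos hω]
        refine ENNReal.continuous_ofReal.comp ?_
        show Continuous fun t : ℝ => A ω ^ t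
        rw [this]
        exact Real.continuous_exp.comp (continuous_const.mul continuous_id)
      have := (hc.tendsto x₀).comp hφtendsto
      exact (this.liminf_eq).symm
    calc f x₀ = ∫⁻ ω, liminf (fun k => ENNReal.ofReal (A ω ^ x (φ k))) atTop ∂μ :=
          lintegral_congr_ae hae
      _ ≤ liminf (fun k => f (x (φ k))) atTop := lintegral_liminf_le hmeask
  refine key.trans ?_
  have hbound : ∀ k : ℕ, f (x (φ k)) ≤ p + ((k : ℝ≥0∞) + 1)⁻¹ := by
    intro k
    refine (hxlt (φ k)).le.trans (add_le_add le_rfl ?_)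
    have : (k : ℝ≥0∞) + 1 ≤ (φ k : ℝ≥0∞) + 1 := by
      gcongr
      exact_mod_cast hφmono.le_apply
    exact ENNReal.inv_le_inv.2 this
  have htend : Tendsto (fun k : ℕ => p + ((k : ℝ≥0∞) + 1)⁻¹) atTop (nhds p) := by
    have h1 : Tendsto (fun k : ℕ => ((k : ℝ≥0∞) + 1)⁻¹) atTop (nhds 0) := by
      have := ENNReal.tendsto_inv_nat_nhds_zero
      have h2 : Tendsto (fun k : ℕ => (k + 1 : ℕ)) atTop atTop :=
        tendsto_atTop_mono (fun n => Nat.le_succ n) tendsto_id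
      have h3 := this.comp h2
      have : (fun k : ℕ => ((k : ℝ≥0∞) + 1)⁻¹) = (fun n : ℕ => ((n : ℝ≥0∞))⁻¹) ∘ (fun k => k + 1) := by
        ext k; simp [Function.comp]
      rw [this]
      exact h3
    have := Tendsto.add (tendsto_const_nhds (x := p) (f := atTop)) h1
    simpa using this
  calc liminf (fun k => f (x (φ k))) atTop
      ≤ liminf (fun k : ℕ => p + ((k : ℝ≥0∞) + 1)⁻¹) atTop :=
        liminf_le_liminf (Eventually.of_forall hbound)
    _ = p := htend.liminf_eq

/-- The vertex given by the length-`(i+1)` prefix of a vertex. -/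
private def vtake (T : LFTree) (v : T.Vertex) (i : ℕ) : T.Vertex :=
  ⟨v.1.take (i + 1), T.prefix_closed v.2.1 (List.take_prefix _ _), by
    intro h
    rcases List.take_eq_nil_iff.1 h with h' | h'
    · exact Nat.succ_ne_zero i h'
    · exact v.2.2 h'⟩

/-- Part (3) of Theorem 1 (Lyons–Pemantle): if `Σ_{σ ≠ root} p^{|σ|} < ∞`, then
almost surely `Σ_{σ ≠ root} C_σ < ∞`. -/
theorem sum_C_lt_top_of_sum_p_lt_top
    (T : LFTree) {Ω : Type*} [MeasurableSpace Ω] (μ : Measure Ω) [IsProbabilityMeasure μ]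
    (A : Ω → ℝ) (hA : Measurable A) (hApos : ∀ᵐ ω ∂μ, 0 < A ω)
    (Aσ : List ℕ → Ω → ℝ) (hmeas : ∀ v : T.Vertex, Measurable (Aσ v.1))
    (hid : ∀ v : T.Vertex, IdentDistrib (Aσ v.1) A μ μ)
    (hind : iIndepFun (fun v : T.Vertex => Aσ v.1) μ)
    (hsum : ∑' v : T.Vertex, (pval μ A) ^ v.1.length ≠ ∞) :
    ∀ᵐ ω ∂μ, ∑' v : T.Vertex, ENNReal.ofReal (cumul Aσ v.1 ω) < ∞ := by
  classical
  haveI : Countable T.Vertex :=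
    inferInstanceAs (Countable {σ : List ℕ // σ ∈ T.carrier ∧ σ ≠ []})
  obtain ⟨x₀, hx₀mem, hfx₀⟩ := exists_attains_pval μ A hA hApos
  -- the transformed random variables
  set φf : ℝ → ℝ≥0∞ := fun y => ENNReal.ofReal (y ^ x₀) with hφf
  have hφcont : Continuous φf :=
    ENNReal.continuous_ofReal.comp (Real.continuous_rpow_const hx₀mem.1)
  have hφm : Measurable φf := hφcont.measurable
  set g : T.Vertex → Ω → ℝ≥0∞ := fun v ω => φf (Aσ v.1 ω) with hg
  have hgmeas : ∀ v, Measurable (g v) := fun v => hφm.comp (hmeas v)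
  have hgind : iIndepFun g μ :=
    hind.comp (fun _ => φf) (fun _ => hφm)
  have hglint : ∀ v, ∫⁻ ω, g v ω ∂μ = pval μ A := by
    intro v
    have := ((hid v).comp hφm).lintegral_eq
    simpa [hg, hφf, Function.comp] using this.trans hfx₀
  -- the products
  set G : T.Vertex → Ω → ℝ≥0∞ :=
    fun v ω => ∏ i ∈ Finset.range v.1.length, g (vtake T v i) ω with hG
  have hGmeas : ∀ v, Measurable (G v) := by
    intro v
    have := Finset.measurable_prod (Finset.range v.1.length)
      (fun i (_ : i ∈ Finset.range v.1.length) => hgmeas (vtake T v i))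
    simpa [hG] using this
  have hinj : ∀ v : T.Vertex, Set.InjOn (vtake T v) (Finset.range v.1.length) := by
    intro v i hi j hj hij
    have hi' : i < v.1.length := Finset.mem_range.1 (by exact_mod_cast hi)
    have hj' : j < v.1.length := Finset.mem_range.1 (by exact_mod_cast hj)
    have hlen := congrArg (fun w : T.Vertex => w.1.length) hij
    simp only [vtake, List.length_take] at hlen
    omega
  have hGlint : ∀ v : T.Vertex, ∫⁻ ω, G v ω ∂μ = (pval μ A) ^ v.1.length := by
    intro v
    have h1 : ∀ ω, G v ω = ∏ w ∈ (Finset.range v.1.length).image (vtake T v), g w ω := by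
      intro ω
      rw [Finset.prod_image (fun i hi j hj h => hinj v (by exact_mod_cast hi)
        (by exact_mod_cast hj) h)]
    calc ∫⁻ ω, G v ω ∂μ
        = ∫⁻ ω, ∏ w ∈ (Finset.range v.1.length).image (vtake T v), g w ω ∂μ := by
          exact lintegral_congr fun ω => h1 ω
      _ = ∏ w ∈ (Finset.range v.1.length).image (vtake T v), ∫⁻ ω, g w ω ∂μ :=
          lintegral_prod_of_indep hgmeas hgind _
      _ = ∏ i ∈ Finset.range v.1.length, ∫⁻ ω, g (vtake T v i) ω ∂μ :=
          Finset.prod_image (fun i hi j hj h => hinj v (by exact_mod_cast hi)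
            (by exact_mod_cast hj) h)
      _ = (pval μ A) ^ v.1.length := by
          simp [hglint]
  -- expected total sum is finite
  have hlt : ∀ᵐ ω ∂μ, ∑' v : T.Vertex, G v ω < ∞ := by
    refine ae_lt_top (Measurable.ennreal_tsum hGmeas) ?_
    rw [lintegral_tsum (fun v => (hGmeas v).aemeasurable)]
    simpa [hGlint] using hsum
  -- a.s. all the A's are positive
  have hallpos : ∀ᵐ ω ∂μ, ∀ v : T.Vertex, 0 < Aσ v.1 ω := by
    rw [ae_all_iff]
    intro v
    rw [ae_iff]
    have hs : {ω | ¬0 < Aσ v.1 ω} = Aσ v.1 ⁻¹' Set.Iic 0 := by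
      ext ω; simp [not_lt]
    have hs' : {ω | ¬0 < A ω} = A ⁻¹' Set.Iic 0 := by
      ext ω; simp [not_lt]
    have := (hid v).measure_mem_eq measurableSet_Iic (s := Set.Iic (0:ℝ))
    rw [hs, this, ← hs']
    exact ae_iff.1 hApos
  filter_upwards [hlt, hallpos] with ω hfin hpos
  -- deterministic part
  set n : T.Vertex → ℕ := fun v => v.1.length with hn
  have hGeq : ∀ v : T.Vertex, G v ω = ENNReal.ofReal (cumul Aσ v.1 ω ^ x₀) := by
    intro v
    have hprod : cumul Aσ v.1 ω = ∏ i ∈ Finset.range (n v), Aσ ((vtake T v i).1) ω := rfl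
    have hnn : ∀ i ∈ Finset.range (n v), (0:ℝ) ≤ Aσ ((vtake T v i).1) ω :=
      fun i _ => (hpos (vtake T v i)).le
    rw [hprod, ← Real.finset_prod_rpow _ _ hnn, ENNReal.ofReal_prod_of_nonneg
      (fun i _ => Real.rpow_nonneg (hnn i ‹_›) x₀)]
  have hcpos : ∀ v : T.Vertex, 0 < cumul Aσ v.1 ω := by
    intro v
    exact Finset.prod_pos fun i _ => hpos (vtake T v i)
  set F : Set T.Vertex := {v | 1 ≤ G v ω} with hF
  have hFfin : F.Finite := ENNReal.finite_const_le_of_tsum_ne_top hfin.ne one_ne_zero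
  have hpw : ∀ v : T.Vertex, ENNReal.ofReal (cumul Aσ v.1 ω) ≤
      G v ω + F.indicator (fun v => ENNReal.ofReal (cumul Aσ v.1 ω)) v := by
    intro v
    by_cases hv : v ∈ F
    · rw [Set.indicator_of_mem hv]
      exact le_add_self
    · rw [Set.indicator_of_notMem hv, add_zero, hGeq v]
      have hlt1 : cumul Aσ v.1 ω ^ x₀ < 1 := by
        have : ¬ (1:ℝ≥0∞) ≤ G v ω := hv
        rw [not_le, hGeq v, ENNReal.ofReal_lt_one] at this
        exact this
      have hle1 : cumul Aσ v.1 ω ≤ 1 := by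
        by_contra hcon
        push_neg at hcon
        exact absurd (Real.one_le_rpow hcon.le hx₀mem.1) (not_le.2 hlt1)
      have : cumul Aσ v.1 ω ≤ cumul Aσ v.1 ω ^ x₀ := by
        calc cumul Aσ v.1 ω = cumul Aσ v.1 ω ^ (1:ℝ) := (Real.rpow_one _).symm
          _ ≤ cumul Aσ v.1 ω ^ x₀ :=
            Real.rpow_le_rpow_of_exponent_ge (hcpos v) hle1 hx₀mem.2
      exact ENNReal.ofReal_le_ofReal this
  have hindic : ∑' v : T.Vertex,
      F.indicator (fun v => ENNReal.ofReal (cumul Aσ v.1 ω)) v < ∞ := by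
    rw [tsum_eq_sum (s := hFfin.toFinset) (fun v hv => Set.indicator_of_notMem
      (by simpa using hv) _)]
    exact ENNReal.sum_lt_top.2 fun v _ => lt_of_le_of_lt (Set.indicator_le_self _ _ v)
      ENNReal.ofReal_lt_top
  calc ∑' v : T.Vertex, ENNReal.ofReal (cumul Aσ v.1 ω)
      ≤ ∑' v : T.Vertex, (G v ω +
          F.indicator (fun v => ENNReal.ofReal (cumul Aσ v.1 ω)) v) :=
        ENNReal.tsum_le_tsum hpw
    _ = (∑' v : T.Vertex, G v ω) + ∑' v : T.Vertex,
          F.indicator (fun v => ENNReal.ofReal (cumul Aσ v.1 ω)) v := ENNReal.tsum_add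
    _ < ∞ := ENNReal.add_lt_top.2 ⟨hfin, hindic⟩
end

section
/- If inf over cutsets Π of Σ_{σ∈Π} p^{|σ|} = 0 (in particular, if p · br T < 1), then almost surely the infimum over cutsets Π of Σ_{σ∈Π} C_σ equals 0, and consequently almost surely the only flow θ on T satisfying θ(σ) ≤ C_σ for all non-root σ is the zero flow. -/
open MeasureTheory ProbabilityTheory Filter
open scoped ENNReal NNReal

section Det

variable {T : LFTree} {θ : List ℕ → ℝ}

lemma pref_length (s : ℕ → ℕ) (n : ℕ) : (LFTree.pref s n).length = n := by
  simp [LFTree.pref]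

lemma pref_succ (s : ℕ → ℕ) (n : ℕ) :
    LFTree.pref s (n + 1) = LFTree.pref s n ++ [s n] := by
  rw [LFTree.pref, List.ofFn_succ']
  simp [LFTree.pref, List.concat_eq_append]

lemma flow_conserv (hθ : T.IsFlow θ) {σ : List ℕ} (hσ : σ ∈ T.carrier) (hne : σ ≠ []) :
    θ σ = ∑ n ∈ (T.locallyFinite σ hσ).toFinset, θ (σ ++ [n]) := by
  haveI : Fintype {n : ℕ // σ ++ [n] ∈ T.carrier} := (T.locallyFinite σ hσ).fintype
  rw [hθ.2 σ hσ hne, tsum_fintype]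
  exact (Finset.sum_subtype (T.locallyFinite σ hσ).toFinset
    (fun x => (T.locallyFinite σ hσ).mem_toFinset) (fun n => θ (σ ++ [n]))).symm

lemma flow_child_le (hθ : T.IsFlow θ) {σ : List ℕ} {n : ℕ}
    (hσn : σ ++ [n] ∈ T.carrier) (hne : σ ≠ []) : θ (σ ++ [n]) ≤ θ σ := by
  have hσ : σ ∈ T.carrier := T.prefix_closed hσn ⟨[n], rfl⟩
  rw [flow_conserv hθ hσ hne]
  refine Finset.single_le_sum (f := fun m => θ (σ ++ [m])) (fun m hm => ?_)
    (((T.locallyFinite σ hσ).mem_toFinset).2 hσn)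
  exact hθ.1 _ ((T.locallyFinite σ hσ).mem_toFinset.1 hm) (by simp)

lemma flow_prefix_le (hθ : T.IsFlow θ) :
    ∀ (l σ : List ℕ), σ ≠ [] → σ ++ l ∈ T.carrier → θ (σ ++ l) ≤ θ σ := by
  intro l
  induction l with
  | nil => intro σ _ _; simp
  | cons a l ih =>
    intro σ hne hmem
    have h1 : σ ++ [a] ∈ T.carrier := by
      refine T.prefix_closed hmem ⟨l, by simp⟩
    have h2 : (σ ++ [a]) ++ l ∈ T.carrier := by simpa using hmem
    calc θ (σ ++ a :: l) = θ ((σ ++ [a]) ++ l) := by simp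
      _ ≤ θ (σ ++ [a]) := ih (σ ++ [a]) (by simp) h2
      _ ≤ θ σ := flow_child_le hθ h1 hne

lemma flow_pos_child (hθ : T.IsFlow θ) {σ : List ℕ} (hσ : σ ∈ T.carrier) (hne : σ ≠ [])
    (hpos : 0 < θ σ) : ∃ n : ℕ, σ ++ [n] ∈ T.carrier ∧ 0 < θ (σ ++ [n]) := by
  by_contra h
  push_neg at h
  have : θ σ = 0 := by
    rw [flow_conserv hθ hσ hne]
    refine Finset.sum_eq_zero fun n hn => ?_
    have hmem := (T.locallyFinite σ hσ).mem_toFinset.1 hn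
    exact le_antisymm (h n hmem) (hθ.1 _ hmem (by simp))
  exact absurd this (ne_of_gt hpos)

lemma exists_ray_extending (hθ : T.IsFlow θ) {σ : List ℕ} (hσ : σ ∈ T.carrier)
    (hne : σ ≠ []) (hpos : 0 < θ σ) :
    ∃ s : ℕ → ℕ, T.IsRay s ∧ ∀ n ≤ σ.length, LFTree.pref s n = σ.take n := by
  classical
  set Good : Type := {l : List ℕ // l ∈ T.carrier ∧ l ≠ [] ∧ 0 < θ l} with hGood
  have step : ∀ v : Good, ∃ n : ℕ, v.1 ++ [n] ∈ T.carrier ∧ 0 < θ (v.1 ++ [n]) :=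
    fun v => flow_pos_child hθ v.2.1 v.2.2.1 v.2.2.2
  choose f hf using step
  let F : Good → Good := fun v => ⟨v.1 ++ [f v], (hf v).1, by simp, (hf v).2⟩
  let g : ℕ → Good := fun n => F^[n] ⟨σ, hσ, hne, hpos⟩
  have hg0 : (g 0).1 = σ := rfl
  have hgsucc : ∀ n, ∃ a, (g (n + 1)).1 = (g n).1 ++ [a] := by
    intro n
    refine ⟨f (g n), ?_⟩
    show (F^[n + 1] _).1 = _
    rw [Function.iterate_succ_apply']
  have hglen : ∀ n, (g n).1.length = σ.length + n := by
    intro n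
    induction n with
    | zero => simp [hg0]
    | succ n ih =>
      obtain ⟨a, ha⟩ := hgsucc n
      rw [ha]
      simp only [List.length_append, List.length_singleton, ih]
      omega
  set L := σ.length with hL
  set u : ℕ → List ℕ := fun n => if n ≤ L then σ.take n else (g (n - L)).1 with hu
  have huL : ∀ n ≤ L, u n = σ.take n := fun n hn => by simp [hu, hn]
  have humem : ∀ n, u n ∈ T.carrier := by
    intro n
    by_cases hn : n ≤ L
    · rw [huL n hn]; exact T.prefix_closed hσ (List.take_prefix _ _)
    · simp only [hu, if_neg hn]; exact (g (n - L)).2.1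
  have hustep : ∀ n, ∃ a, u (n + 1) = u n ++ [a] := by
    intro n
    by_cases h1 : n + 1 ≤ L
    · have h0 : n ≤ L := by omega
      have hnlt : n < σ.length := by omega
      refine ⟨σ[n]'hnlt, ?_⟩
      rw [huL _ h1, huL _ h0]
      exact (List.take_concat_get' σ n hnlt).symm
    · by_cases h0 : n ≤ L
      · obtain ⟨a, ha⟩ := hgsucc 0
        refine ⟨a, ?_⟩
        have h2 : n + 1 - L = 1 := by omega
        have h3 : u (n + 1) = (g 1).1 := by
          simp only [hu]; rw [if_neg h1, h2]
        have h4 : u n = σ := by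
          rw [huL n h0, (by omega : n = L), hL]
          exact List.take_length
        rw [h3, h4, show (1 : ℕ) = 0 + 1 from rfl, ha, hg0]
      · obtain ⟨a, ha⟩ := hgsucc (n - L)
        refine ⟨a, ?_⟩
        have h1' : n + 1 - L = (n - L) + 1 := by omega
        simp only [hu, if_neg h1, if_neg h0, h1']
        exact ha
  choose s hs using hustep
  have hpref : ∀ n, LFTree.pref s n = u n := by
    intro n
    induction n with
    | zero => simp [LFTree.pref, huL 0 (by omega)]
    | succ n ih => rw [pref_succ, ih, hs n]
  refine ⟨s, fun n => by rw [hpref]; exact humem n, fun n hn => by rw [hpref]; exact huL n hn⟩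

lemma cutset_theta_nonneg (hθ : T.IsFlow θ) {c : Finset (List ℕ)} (hc : T.IsCutset c)
    {τ : List ℕ} (hτ : τ ∈ c) : 0 ≤ θ τ :=
  hθ.1 τ (hc.1 τ hτ).1 (hc.1 τ hτ).2

lemma flow_deep_eq_zero (hθ : T.IsFlow θ) {c : Finset (List ℕ)} (hc : T.IsCutset c)
    {σ : List ℕ} (hσ : σ ∈ T.carrier) (hne : σ ≠ [])
    (hdeep : c.sup List.length < σ.length)
    (hnp : ∀ τ ∈ c, τ <+: σ → τ = σ) : θ σ ≤ 0 := by
  by_contra h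
  push_neg at h
  have hpos : 0 < θ σ := lt_of_le_of_ne (hθ.1 σ hσ hne) (by intro h'; exact absurd h'.symm (ne_of_gt h))
  obtain ⟨s, hray, htake⟩ := exists_ray_extending hθ hσ hne hpos
  obtain ⟨τ, hτc, n, hτn⟩ := hc.2.1 s hray
  have hlen : τ.length = n := by rw [hτn, pref_length]
  have hnN : n ≤ c.sup List.length := by rw [← hlen]; exact Finset.le_sup hτc
  have hτtake : τ = σ.take n := by rw [hτn, htake n (by omega)]
  have : τ = σ := hnp τ hτc (by rw [hτtake]; exact List.take_prefix _ _)
  rw [this] at hlen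
  omega

lemma flow_le_cutset_sum (hθ : T.IsFlow θ) {c : Finset (List ℕ)} (hc : T.IsCutset c) :
    ∀ k : ℕ, ∀ σ : List ℕ, σ ∈ T.carrier → σ ≠ [] →
      c.sup List.length + 1 - σ.length ≤ k →
      (∀ τ ∈ c, τ <+: σ → τ = σ) →
      θ σ ≤ ∑ τ ∈ c.filter (σ <+: ·), θ τ := by
  classical
  intro k
  induction k with
  | zero =>
    intro σ hσ hne hk hnp
    have hdeep : c.sup List.length < σ.length := by omega
    refine le_trans (flow_deep_eq_zero hθ hc hσ hne hdeep hnp) ?_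
    exact Finset.sum_nonneg fun τ hτ => cutset_theta_nonneg hθ hc (Finset.mem_filter.1 hτ).1
  | succ k ih =>
    intro σ hσ hne hk hnp
    by_cases hdeep : c.sup List.length < σ.length
    · refine le_trans (flow_deep_eq_zero hθ hc hσ hne hdeep hnp) ?_
      exact Finset.sum_nonneg fun τ hτ => cutset_theta_nonneg hθ hc (Finset.mem_filter.1 hτ).1
    push_neg at hdeep
    by_cases hσc : σ ∈ c
    · refine Finset.single_le_sum (fun τ hτ => cutset_theta_nonneg hθ hc (Finset.mem_filter.1 hτ).1) ?_
      exact Finset.mem_filter.2 ⟨hσc, List.prefix_refl σ⟩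
    · -- expand via children
      have hcons := flow_conserv hθ hσ hne
      set ch := (T.locallyFinite σ hσ).toFinset with hch
      have hchild : ∀ n ∈ ch, θ (σ ++ [n]) ≤ ∑ τ ∈ c.filter ((σ ++ [n]) <+: ·), θ τ := by
        intro n hn
        have hmem : σ ++ [n] ∈ T.carrier := (T.locallyFinite σ hσ).mem_toFinset.1 hn
        have hlen1 : (σ ++ [n]).length = σ.length + 1 := by simp
        refine ih (σ ++ [n]) hmem (by simp) (by omega) ?_
        intro τ hτc hpre
        by_cases heq : τ = σ ++ [n]
        · exact heq
        · exfalso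
          have hlt : τ.length ≤ σ.length := by
            have h1 : τ.length ≤ σ.length + 1 := by
              have := hpre.length_le; simpa using this
            rcases Nat.lt_or_ge τ.length (σ.length + 1) with h | h
            · omega
            · exact absurd (hpre.eq_of_length (by simp; omega)) heq
          have hτσ : τ <+: σ :=
            List.prefix_of_prefix_length_le hpre ⟨[n], rfl⟩ (by simpa using hlt)
          exact hσc (hnp τ hτc hτσ ▸ hτc)
      have hdisj : (↑ch : Set ℕ).PairwiseDisjoint
          (fun n => c.filter ((σ ++ [n]) <+: ·)) := by
        intro n _ m _ hnm
        simp only [Function.onFun, Finset.disjoint_left]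
        intro τ hτn hτm
        have h1 := (Finset.mem_filter.1 hτn).2
        have h2 := (Finset.mem_filter.1 hτm).2
        have : σ ++ [n] = σ ++ [m] :=
          (List.prefix_of_prefix_length_le h1 h2 (by simp)).eq_of_length (by simp)
        exact hnm (by simpa using this)
      calc θ σ = ∑ n ∈ ch, θ (σ ++ [n]) := hcons
        _ ≤ ∑ n ∈ ch, ∑ τ ∈ c.filter ((σ ++ [n]) <+: ·), θ τ :=
            Finset.sum_le_sum hchild
        _ = ∑ τ ∈ ch.biUnion (fun n => c.filter ((σ ++ [n]) <+: ·)), θ τ :=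
            (Finset.sum_biUnion hdisj).symm
        _ ≤ ∑ τ ∈ c.filter (σ <+: ·), θ τ := by
            refine Finset.sum_le_sum_of_subset_of_nonneg ?_ ?_
            · intro τ hτ
              obtain ⟨n, _, hτn⟩ := Finset.mem_biUnion.1 hτ
              obtain ⟨hτc, hpre⟩ := Finset.mem_filter.1 hτn
              exact Finset.mem_filter.2 ⟨hτc, (List.prefix_append σ ([n])).trans hpre⟩
            · intro τ hτ _
              exact cutset_theta_nonneg hθ hc (Finset.mem_filter.1 hτ).1

lemma flow_zero_of_inf_cutset (hθ : T.IsFlow θ) (C : List ℕ → ℝ)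
    (hbound : ∀ σ : List ℕ, σ ∈ T.carrier → σ ≠ [] → θ σ ≤ C σ)
    (h1 : ∀ ε : ℝ, 0 < ε → ∃ c : Finset (List ℕ), T.IsCutset c ∧ ∑ τ ∈ c, C τ < ε) :
    ∀ σ : List ℕ, σ ∈ T.carrier → σ ≠ [] → θ σ = 0 := by
  classical
  intro σ hσ hne
  refine le_antisymm ?_ (hθ.1 σ hσ hne)
  by_contra h
  push_neg at h
  obtain ⟨c, hc, hsum⟩ := h1 (θ σ) h
  have hθsum : ∑ τ ∈ c, θ τ ≤ ∑ τ ∈ c, C τ :=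
    Finset.sum_le_sum fun τ hτ => hbound τ (hc.1 τ hτ).1 (hc.1 τ hτ).2
  have key : θ σ ≤ ∑ τ ∈ c, θ τ := by
    by_cases hnp : ∀ τ ∈ c, τ <+: σ → τ = σ
    · refine le_trans (flow_le_cutset_sum hθ hc (c.sup List.length + 1) σ hσ hne (by omega) hnp) ?_
      refine Finset.sum_le_sum_of_subset_of_nonneg (Finset.filter_subset _ _) ?_
      intro τ hτ _; exact cutset_theta_nonneg hθ hc hτ
    · push_neg at hnp
      obtain ⟨τ, hτc, hpre, hneq⟩ := hnp
      obtain ⟨l, hl⟩ := hpre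
      have hθστ : θ σ ≤ θ τ := by
        rw [← hl]
        exact flow_prefix_le hθ l τ (hc.1 τ hτc).2 (hl ▸ hσ)
      refine le_trans hθστ (Finset.single_le_sum (fun τ' hτ' => cutset_theta_nonneg hθ hc hτ') hτc)
  linarith

end Det

open scoped Topology
section Prob

variable {T : LFTree} {Ω : Type*} [MeasurableSpace Ω] {μ : Measure Ω} [IsProbabilityMeasure μ]
  {A : Ω → ℝ} {Aσ : List ℕ → Ω → ℝ}

lemma pval_le_one : pval μ A ≤ 1 := by
  have h0 : (0:ℝ) ∈ Set.Icc (0:ℝ) 1 := ⟨le_refl 0, by norm_num⟩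
  refine le_trans (iInf₂_le 0 h0) ?_
  have he : (fun ω => ENNReal.ofReal (A ω ^ (0:ℝ))) = fun _ => (1 : ℝ≥0∞) := by
    funext ω; simp [Real.rpow_zero]
  rw [he, lintegral_one, measure_univ]

lemma key_choice
    (hinf : ∀ ε : ℝ≥0∞, 0 < ε →
      ∃ c : Finset (List ℕ), T.IsCutset c ∧ ∑ σ ∈ c, (pval μ A) ^ σ.length < ε)
    (δ : ℝ≥0∞) (hδ0 : 0 < δ) (hδ1 : δ ≤ 2⁻¹) :
    ∃ (c : Finset (List ℕ)) (x : ℝ), T.IsCutset c ∧ 0 < x ∧ x ≤ 1 ∧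
      ∑ σ ∈ c, (∫⁻ ω, ENNReal.ofReal (A ω ^ x) ∂μ) ^ σ.length < δ := by
  classical
  have hδtop : δ ≠ ⊤ := (lt_of_le_of_lt hδ1 (by norm_num)).ne
  obtain ⟨c, hc, hsum⟩ := hinf (δ / 2) (ENNReal.div_pos hδ0.ne' (by norm_num))
  rcases c.eq_empty_or_nonempty with hce | ⟨σ₀, hσ₀⟩
  · exact ⟨c, 1, hc, one_pos, le_refl 1, by rw [hce]; simpa using hδ0⟩
  · set p : ℝ≥0∞ := pval μ A with hp
    have hptop : p ≠ ⊤ := (lt_of_le_of_lt pval_le_one (by norm_num)).ne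
    have hcont : ContinuousAt (fun q : ℝ≥0∞ => ∑ σ ∈ c, q ^ σ.length) p :=
      (continuous_finset_sum c fun σ _ => ENNReal.continuous_pow σ.length).continuousAt
    have hsum' : ∑ σ ∈ c, p ^ σ.length < δ :=
      lt_of_lt_of_le hsum (ENNReal.half_le_self)
    have hmem : {q : ℝ≥0∞ | ∑ σ ∈ c, q ^ σ.length < δ} ∈ 𝓝 p :=
      hcont (IsOpen.mem_nhds isOpen_Iio hsum')
    haveI : (𝓝[>] p).NeBot := nhdsGT_neBot_of_exists_gt ⟨⊤, lt_of_le_of_lt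
      (le_trans pval_le_one (by norm_num : (1:ℝ≥0∞) ≤ 2)) (by norm_num)⟩
    have hmem2 : {q : ℝ≥0∞ | ∑ σ ∈ c, q ^ σ.length < δ} ∈ 𝓝[>] p :=
      nhdsWithin_le_nhds hmem
    obtain ⟨q, hqδ, hpq⟩ := (Filter.eventually_and.2
      ⟨hmem2, self_mem_nhdsWithin⟩).exists
    have hq1 : q < 1 := by
      by_contra h
      push_neg at h
      have h1 : (1:ℝ≥0∞) ≤ q ^ σ₀.length := one_le_pow_of_one_le' h _
      have h2 : q ^ σ₀.length ≤ ∑ σ ∈ c, q ^ σ.length :=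
        Finset.single_le_sum (f := fun σ : List ℕ => q ^ σ.length) (fun σ _ => zero_le) hσ₀
      have : (1:ℝ≥0∞) < 2⁻¹ := lt_of_le_of_lt (h1.trans h2) (lt_of_lt_of_le hqδ hδ1)
      norm_num at this
    obtain ⟨x, hxlt⟩ := iInf_lt_iff.mp (show pval μ A < q from hpq)
    obtain ⟨hxI, hIx⟩ := iInf_lt_iff.mp hxlt
    have hx0 : x ≠ 0 := by
      intro h
      rw [h] at hIx
      have he : (fun ω => ENNReal.ofReal (A ω ^ (0:ℝ))) = fun _ => (1 : ℝ≥0∞) := by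
        funext ω; simp [Real.rpow_zero]
      rw [he, lintegral_one, measure_univ] at hIx
      exact absurd (hIx.trans hq1) (by norm_num)
    refine ⟨c, x, hc, lt_of_le_of_ne hxI.1 (Ne.symm hx0), hxI.2, ?_⟩
    refine lt_of_le_of_lt (Finset.sum_le_sum fun σ _ => ?_) hqδ
    exact pow_le_pow_left' hIx.le σ.length

end Prob

section Lint

variable {T : LFTree} {Ω : Type*} [MeasurableSpace Ω] {μ : Measure Ω} [IsProbabilityMeasure μ]
  {A : Ω → ℝ} {Aσ : List ℕ → Ω → ℝ}

lemma take_mem_ne {σ : List ℕ} (hσ : σ ∈ T.carrier) {i : ℕ} (hi : i < σ.length) :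
    σ.take (i+1) ∈ T.carrier ∧ σ.take (i+1) ≠ [] := by
  refine ⟨T.prefix_closed hσ (List.take_prefix _ _), ?_⟩
  have h2 : (σ.take (i+1)).length = i+1 := by
    rw [List.length_take]; omega
  intro h; rw [h] at h2; simp at h2

lemma lintegral_indep_prod
    (hmeas : ∀ v : T.Vertex, Measurable (Aσ v.1))
    (hid : ∀ v : T.Vertex, IdentDistrib (Aσ v.1) A μ μ)
    (hind : iIndepFun (fun v : T.Vertex => Aσ v.1) μ)
    {x : ℝ} (hx0 : 0 ≤ x) {σ : List ℕ} (hσ : σ ∈ T.carrier) :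
    ∫⁻ ω, ∏ i ∈ Finset.range σ.length, ENNReal.ofReal (Aσ (σ.take (i+1)) ω ^ x) ∂μ
      = (∫⁻ ω, ENNReal.ofReal (A ω ^ x) ∂μ) ^ σ.length := by
  classical
  set G : T.Vertex → Ω → ℝ≥0∞ := fun v ω => ENNReal.ofReal (Aσ v.1 ω ^ x) with hG
  have hgm : Measurable (fun r : ℝ => ENNReal.ofReal (r ^ x)) :=
    (Real.continuous_rpow_const hx0).measurable.ennreal_ofReal
  have hGmeas : ∀ v, Measurable (G v) := fun v => hgm.comp (hmeas v)
  have hGind : iIndepFun G μ :=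
    hind.comp (fun _ r => ENNReal.ofReal (r ^ x)) (fun _ => hgm)
  have hGint : ∀ v, ∫⁻ ω, G v ω ∂μ = ∫⁻ ω, ENNReal.ofReal (A ω ^ x) ∂μ := fun v =>
    ((hid v).comp hgm).lintegral_eq
  have hprod : ∀ S : Finset T.Vertex,
      ∫⁻ ω, ∏ v ∈ S, G v ω ∂μ = ∏ v ∈ S, ∫⁻ ω, G v ω ∂μ := by
    intro S
    induction S using Finset.induction_on with
    | empty => simp
    | @insert a S ha ih =>
      have hindep : IndepFun (G a) (fun ω => ∏ v ∈ S, G v ω) μ := by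
        have h := (hGind.indepFun_finsetProd_of_notMem hGmeas ha).symm
        have he : (∏ v ∈ S, G v) = fun ω => ∏ v ∈ S, G v ω := by
          funext ω; simp [Finset.prod_apply]
        rwa [he] at h
      have hmul := lintegral_mul_eq_lintegral_mul_lintegral_of_indepFun
        (hGmeas a) (Finset.measurable_prod S (fun v _ => hGmeas v)) hindep
      have he2 : ∀ ω, ∏ v ∈ insert a S, G v ω = G a ω * ∏ v ∈ S, G v ω := fun ω =>
        Finset.prod_insert ha
      calc ∫⁻ ω, ∏ v ∈ insert a S, G v ω ∂μ
          = ∫⁻ ω, (G a * fun ω' => ∏ v ∈ S, G v ω') ω ∂μ := by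
            refine lintegral_congr fun ω => ?_
            rw [he2 ω]; rfl
        _ = (∫⁻ ω, G a ω ∂μ) * ∫⁻ ω, ∏ v ∈ S, G v ω ∂μ := hmul
        _ = ∏ v ∈ insert a S, ∫⁻ ω, G v ω ∂μ := by
            rw [ih, Finset.prod_insert ha]
  set vf : {i // i ∈ Finset.range σ.length} → T.Vertex :=
    fun i => ⟨σ.take (i.1+1), take_mem_ne hσ (Finset.mem_range.1 i.2)⟩ with hvf
  have hinj : Function.Injective vf := by
    intro i j hij
    have h1 := congrArg (fun v : T.Vertex => v.1.length) hij
    simp only [hvf, List.length_take] at h1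
    have hi := Finset.mem_range.1 i.2
    have hj := Finset.mem_range.1 j.2
    have : i.1 = j.1 := by omega
    exact Subtype.ext this
  set S : Finset T.Vertex := (Finset.range σ.length).attach.image vf with hS
  have hcard : S.card = σ.length := by
    rw [hS, Finset.card_image_of_injective _ hinj, Finset.card_attach, Finset.card_range]
  have hlhs : ∀ ω, ∏ i ∈ Finset.range σ.length, ENNReal.ofReal (Aσ (σ.take (i+1)) ω ^ x)
      = ∏ v ∈ S, G v ω := by
    intro ω
    rw [hS, Finset.prod_image (fun i _ j _ h => hinj h)]
    exact (Finset.prod_attach (Finset.range σ.length)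
      (fun i => ENNReal.ofReal (Aσ (σ.take (i+1)) ω ^ x))).symm
  calc ∫⁻ ω, ∏ i ∈ Finset.range σ.length, ENNReal.ofReal (Aσ (σ.take (i+1)) ω ^ x) ∂μ
      = ∫⁻ ω, ∏ v ∈ S, G v ω ∂μ := lintegral_congr hlhs
    _ = ∏ v ∈ S, ∫⁻ ω, G v ω ∂μ := hprod S
    _ = (∫⁻ ω, ENNReal.ofReal (A ω ^ x) ∂μ) ^ σ.length := by
        rw [Finset.prod_congr rfl (fun v _ => hGint v), Finset.prod_const, hcard]

end Lint


/-- Part (2) of Theorem 1 (Lyons–Pemantle): if the infimum over cutsets `Π` of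
`Σ_{σ ∈ Π} p^{|σ|}` is `0` (in particular if `p · br T < 1`), then almost surely the
infimum over cutsets of `Σ_{σ ∈ Π} C_σ` is `0`, and consequently almost surely the
only flow `θ` on `T` with `θ(σ) ≤ C_σ` for all non-root `σ` is the zero flow. -/
theorem no_flow_of_inf_cutset_sum_p_eq_zero
    (T : LFTree) {Ω : Type*} [MeasurableSpace Ω] (μ : Measure Ω) [IsProbabilityMeasure μ]
    (A : Ω → ℝ) (hA : Measurable A) (hApos : ∀ᵐ ω ∂μ, 0 < A ω)
    (Aσ : List ℕ → Ω → ℝ) (hmeas : ∀ v : T.Vertex, Measurable (Aσ v.1))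
    (hid : ∀ v : T.Vertex, IdentDistrib (Aσ v.1) A μ μ)
    (hind : iIndepFun (fun v : T.Vertex => Aσ v.1) μ)
    (hinf : ∀ ε : ℝ≥0∞, 0 < ε →
      ∃ c : Finset (List ℕ), T.IsCutset c ∧ ∑ σ ∈ c, (pval μ A) ^ σ.length < ε) :
    ∀ᵐ ω ∂μ,
      (∀ ε : ℝ, 0 < ε →
        ∃ c : Finset (List ℕ), T.IsCutset c ∧ ∑ σ ∈ c, cumul Aσ σ ω < ε) ∧
      (∀ θ : List ℕ → ℝ, T.IsFlow θ →
        (∀ σ : List ℕ, σ ∈ T.carrier → σ ≠ [] → θ σ ≤ cumul Aσ σ ω) →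
        ∀ σ : List ℕ, σ ∈ T.carrier → σ ≠ [] → θ σ = 0) := by
  classical
  haveI hcount : Countable T.Vertex := by
    unfold LFTree.Vertex; infer_instance
  -- a.e. positivity of all vertex variables
  have hAv : ∀ᵐ ω ∂μ, ∀ v : T.Vertex, 0 < Aσ v.1 ω := by
    rw [ae_all_iff]
    intro v
    rw [ae_iff]
    have hset : {ω | ¬ 0 < Aσ v.1 ω} = Aσ v.1 ⁻¹' (Set.Iic 0) := by
      ext ω; simp [not_lt]
    rw [hset, ← Measure.map_apply (hmeas v) measurableSet_Iic, (hid v).map_eq,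
      Measure.map_apply hA measurableSet_Iic]
    have h2 : A ⁻¹' Set.Iic 0 = {ω | ¬ 0 < A ω} := by ext ω; simp [not_lt]
    rw [h2]
    exact ae_iff.mp hApos
  -- per-k data
  have hkey : ∀ k : ℕ, ∃ (c : Finset (List ℕ)) (x : ℝ), T.IsCutset c ∧ 0 < x ∧ x ≤ 1 ∧
      ∑ σ ∈ c, (∫⁻ ω, ENNReal.ofReal (A ω ^ x) ∂μ) ^ σ.length
        < 2⁻¹ ^ k * (2⁻¹ ^ k * 2⁻¹) := by
    intro k
    have h2ne : ((2:ℝ≥0∞))⁻¹ ≠ 0 := ENNReal.inv_ne_zero.2 (by norm_num)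
    have h2le : ((2:ℝ≥0∞))⁻¹ ≤ 1 := ENNReal.inv_le_one.2 one_le_two
    refine key_choice hinf _ ?_ ?_
    · refine ENNReal.mul_pos (pow_ne_zero _ h2ne) (ENNReal.mul_pos (pow_ne_zero _ h2ne) h2ne).ne'
    · calc (2:ℝ≥0∞)⁻¹ ^ k * (2⁻¹ ^ k * 2⁻¹) ≤ 1 * (1 * 2⁻¹) := by
            refine mul_le_mul' (pow_le_one' h2le k) (mul_le_mul' (pow_le_one' h2le k) le_rfl)
        _ = 2⁻¹ := by rw [one_mul, one_mul]
  choose cs xs hcut hx0 hx1 hsum using hkey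
  set Y : ℕ → Ω → ℝ≥0∞ := fun k ω =>
    ∑ σ ∈ cs k, ∏ i ∈ Finset.range σ.length, ENNReal.ofReal (Aσ (σ.take (i+1)) ω ^ xs k)
    with hY
  have htermmeas : ∀ k, ∀ σ ∈ cs k, Measurable fun ω =>
      ∏ i ∈ Finset.range σ.length, ENNReal.ofReal (Aσ (σ.take (i+1)) ω ^ xs k) := by
    intro k σ hσ
    refine Finset.measurable_prod _ fun i hi => ?_
    exact ((Real.continuous_rpow_const (hx0 k).le).measurable.ennreal_ofReal).comp
      (hmeas ⟨σ.take (i+1), take_mem_ne ((hcut k).1 σ hσ).1 (Finset.mem_range.1 hi)⟩)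
  have hYmeas : ∀ k, Measurable (Y k) := fun k =>
    Finset.measurable_sum _ (htermmeas k)
  have hYint : ∀ k, ∫⁻ ω, Y k ω ∂μ < 2⁻¹ ^ k * (2⁻¹ ^ k * 2⁻¹) := by
    intro k
    rw [show (fun ω => Y k ω) = Y k from rfl, hY,
      lintegral_finset_sum _ (htermmeas k)]
    calc ∑ σ ∈ cs k, ∫⁻ ω, ∏ i ∈ Finset.range σ.length,
          ENNReal.ofReal (Aσ (σ.take (i+1)) ω ^ xs k) ∂μ
        = ∑ σ ∈ cs k, (∫⁻ ω, ENNReal.ofReal (A ω ^ xs k) ∂μ) ^ σ.length := by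
          refine Finset.sum_congr rfl fun σ hσ => ?_
          exact lintegral_indep_prod hmeas hid hind (hx0 k).le ((hcut k).1 σ hσ).1
      _ < 2⁻¹ ^ k * (2⁻¹ ^ k * 2⁻¹) := hsum k
  have hμs : ∀ k, μ {ω | 2⁻¹ ^ k ≤ Y k ω} ≤ 2⁻¹ ^ k := by
    intro k
    have h2 : (2⁻¹ : ℝ≥0∞) ^ k ≠ 0 := pow_ne_zero _ (ENNReal.inv_ne_zero.2 (by norm_num))
    have h3 : (2⁻¹ : ℝ≥0∞) ^ k ≠ ⊤ := ENNReal.pow_ne_top (by norm_num)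
    refine le_trans (meas_ge_le_lintegral_div (hYmeas k).aemeasurable h2 h3) ?_
    rw [ENNReal.div_le_iff h2 h3]
    calc ∫⁻ ω, Y k ω ∂μ ≤ 2⁻¹ ^ k * (2⁻¹ ^ k * 2⁻¹) := (hYint k).le
      _ ≤ 2⁻¹ ^ k * 2⁻¹ ^ k := mul_le_mul_right
          (mul_le_of_le_one_right' (ENNReal.inv_le_one.2 one_le_two)) _
  have hsum_fin : (∑' k, μ {ω | 2⁻¹ ^ k ≤ Y k ω}) ≠ ⊤ := by
    refine ne_top_of_le_ne_top ?_ (ENNReal.tsum_le_tsum hμs)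
    rw [ENNReal.tsum_geometric]
    simp [ENNReal.inv_ne_top]
  have hBC : μ {ω | ∃ᶠ k in atTop, 2⁻¹ ^ k ≤ Y k ω} = 0 :=
    measure_setOf_frequently_eq_zero hsum_fin
  have hev : ∀ᵐ ω ∂μ, ∀ᶠ k in atTop, ¬ (2⁻¹ ^ k ≤ Y k ω) := by
    have h1 : ∀ᵐ ω ∂μ, ¬ (∃ᶠ k in atTop, 2⁻¹ ^ k ≤ Y k ω) := by
      rw [ae_iff]
      simpa only [not_not] using hBC
    filter_upwards [h1] with ω hω
    exact Filter.not_frequently.1 hω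
  filter_upwards [hAv, hev] with ω hpos hevω
  have part1 : ∀ ε : ℝ, 0 < ε →
      ∃ c : Finset (List ℕ), T.IsCutset c ∧ ∑ σ ∈ c, cumul Aσ σ ω < ε := by
    intro ε hε
    obtain ⟨K, hK⟩ := Filter.eventually_atTop.1 hevω
    obtain ⟨k₀, hk₀⟩ := exists_pow_lt_of_lt_one hε (by norm_num : (2⁻¹:ℝ) < 1)
    set k := max K k₀ with hk
    have hYk : Y k ω < 2⁻¹ ^ k := not_le.1 (hK k (le_max_left _ _))
    refine ⟨cs k, hcut k, ?_⟩
    have hterm : ∀ σ ∈ cs k, ∀ i ∈ Finset.range σ.length, 0 < Aσ (σ.take (i+1)) ω := by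
      intro σ hσ i hi
      exact hpos ⟨σ.take (i+1), take_mem_ne ((hcut k).1 σ hσ).1 (Finset.mem_range.1 hi)⟩
    have hCpos : ∀ σ ∈ cs k, 0 < cumul Aσ σ ω := fun σ hσ =>
      Finset.prod_pos (fun i hi => hterm σ hσ i hi)
    have hYeq : Y k ω = ENNReal.ofReal (∑ σ ∈ cs k, (cumul Aσ σ ω) ^ (xs k)) := by
      rw [hY, ENNReal.ofReal_sum_of_nonneg
        (fun σ hσ => Real.rpow_nonneg (hCpos σ hσ).le (xs k))]
      refine Finset.sum_congr rfl fun σ hσ => ?_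
      rw [show cumul Aσ σ ω ^ xs k
          = ∏ i ∈ Finset.range σ.length, (Aσ (σ.take (i+1)) ω) ^ xs k from
          (Real.finset_prod_rpow _ _ (fun i hi => (hterm σ hσ i hi).le) (xs k)).symm,
        ENNReal.ofReal_prod_of_nonneg
          (fun i hi => Real.rpow_nonneg (hterm σ hσ i hi).le (xs k))]
    have h2k1 : ((2:ℝ≥0∞)⁻¹) ^ k = ENNReal.ofReal ((2⁻¹ : ℝ) ^ k) := by
      rw [ENNReal.ofReal_pow (by norm_num)]
      congr 1
      rw [ENNReal.ofReal_inv_of_pos (by norm_num)]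
      norm_num
    have hsx : ∑ σ ∈ cs k, (cumul Aσ σ ω) ^ (xs k) < (2⁻¹:ℝ) ^ k := by
      rw [hYeq, h2k1] at hYk
      exact (ENNReal.ofReal_lt_ofReal_iff_of_nonneg
        (Finset.sum_nonneg fun σ hσ => Real.rpow_nonneg (hCpos σ hσ).le (xs k))).1 hYk
    have hone : ∀ σ ∈ cs k, cumul Aσ σ ω < 1 := by
      intro σ hσ
      by_contra h
      push_neg at h
      have h1 : (1:ℝ) ≤ (cumul Aσ σ ω) ^ (xs k) := Real.one_le_rpow h (hx0 k).le
      have h2 : (cumul Aσ σ ω) ^ (xs k) ≤ ∑ σ' ∈ cs k, (cumul Aσ σ' ω) ^ (xs k) :=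
        Finset.single_le_sum
          (fun σ' hσ' => Real.rpow_nonneg (hCpos σ' hσ').le (xs k)) hσ
      have h3 : ((2:ℝ)⁻¹) ^ k ≤ 1 := pow_le_one₀ (by norm_num) (by norm_num)
      linarith
    have hle : ∀ σ ∈ cs k, cumul Aσ σ ω ≤ (cumul Aσ σ ω) ^ (xs k) := by
      intro σ hσ
      have h := Real.rpow_le_rpow_of_exponent_ge (hCpos σ hσ) (hone σ hσ).le (hx1 k)
      rwa [Real.rpow_one] at h
    calc ∑ σ ∈ cs k, cumul Aσ σ ω
        ≤ ∑ σ ∈ cs k, (cumul Aσ σ ω) ^ (xs k) := Finset.sum_le_sum hle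
      _ < (2⁻¹:ℝ) ^ k := hsx
      _ ≤ (2⁻¹:ℝ) ^ k₀ := pow_le_pow_of_le_one (by norm_num) (by norm_num)
          (le_max_right _ _)
      _ < ε := hk₀
  exact ⟨part1, fun θ hθ hb => flow_zero_of_inf_cutset hθ (fun τ => cumul Aσ τ ω) hb part1⟩
end

section
/- If p · limsup_{n→∞} M_n^{1/n} < 1, where M_n is the number of vertices of T at distance n from the root, then Σ_{σ ∈ T, σ ≠ root} p^{|σ|} < ∞, and hence almost surely Σ_{σ ∈ T, σ ≠ root} C_σ < ∞. -/
open MeasureTheory ProbabilityTheory Filter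
open scoped ENNReal NNReal

/-- The number of vertices of `T` at distance `n` from the root. -/
noncomputable def LFTree.levelCard (T : LFTree) (n : ℕ) : ℕ :=
  Nat.card {σ : List ℕ // σ ∈ T.carrier ∧ σ.length = n}

lemma lintegral_finset_prod_of_iIndep {Ω ι : Type*} [MeasurableSpace Ω] {μ : Measure Ω}
    [IsProbabilityMeasure μ] {f : ι → Ω → ℝ≥0∞}
    (h : iIndepFun f μ) (hm : ∀ i, Measurable (f i))
    (s : Finset ι) :
    ∫⁻ ω, ∏ i ∈ s, f i ω ∂μ = ∏ i ∈ s, ∫⁻ ω, f i ω ∂μ := by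
  classical
  induction s using Finset.induction with
  | empty => simp
  | @insert a s ha ih =>
    have hi : IndepFun (∏ j ∈ s, f j) (f a) μ := h.indepFun_finset_prod_of_notMem hm ha
    have hps : Measurable (∏ j ∈ s, f j) := by
      rw [show (∏ j ∈ s, f j) = fun ω => ∏ j ∈ s, f j ω from funext fun ω => by simp]
      exact Finset.measurable_prod s fun i _ => hm i
    have := lintegral_mul_eq_lintegral_mul_lintegral_of_indepFun hps (hm a) hi
    simp only [Pi.mul_apply, Finset.prod_apply] at this
    rw [Finset.prod_insert ha, ← ih, mul_comm, ← this]
    apply lintegral_congr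
    intro ω
    rw [Finset.prod_insert ha]
    ring

/-- Part (3) of Theorem 1 (Lyons–Pemantle): if `p · limsup_n M_n^{1/n} < 1`, where
`M_n` is the number of vertices at distance `n` from the root, then
`Σ_{σ ≠ root} p^{|σ|} < ∞`, and hence almost surely `Σ_{σ ≠ root} C_σ < ∞`. -/
theorem sum_C_lt_top_of_p_mul_growth_lt_one
    (T : LFTree) {Ω : Type*} [MeasurableSpace Ω] (μ : Measure Ω) [IsProbabilityMeasure μ]
    (A : Ω → ℝ) (hA : Measurable A) (hApos : ∀ᵐ ω ∂μ, 0 < A ω)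
    (Aσ : List ℕ → Ω → ℝ) (hmeas : ∀ v : T.Vertex, Measurable (Aσ v.1))
    (hid : ∀ v : T.Vertex, IdentDistrib (Aσ v.1) A μ μ)
    (hind : iIndepFun (fun v : T.Vertex => Aσ v.1) μ)
    (hgrowth : pval μ A *
        Filter.limsup (fun n : ℕ => (T.levelCard n : ℝ≥0∞) ^ ((n : ℝ)⁻¹)) Filter.atTop < 1) :
    (∑' v : T.Vertex, (pval μ A) ^ v.1.length < ∞) ∧
      ∀ᵐ ω ∂μ, ∑' v : T.Vertex, ENNReal.ofReal (cumul Aσ v.1 ω) < ∞ := by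
  classical
  set L := Filter.limsup (fun n : ℕ => (T.levelCard n : ℝ≥0∞) ^ ((n : ℝ)⁻¹)) Filter.atTop with hLdef
  -- level sets are finite
  have hlevel : ∀ n : ℕ, {σ : List ℕ | σ ∈ T.carrier ∧ σ.length = n}.Finite := by
    intro n
    induction n with
    | zero =>
      apply Set.Finite.subset (Set.finite_singleton ([] : List ℕ))
      rintro σ ⟨-, h⟩
      simpa [List.length_eq_zero_iff] using h
    | succ n ih =>
      have hsub : {σ : List ℕ | σ ∈ T.carrier ∧ σ.length = n + 1} ⊆
          ⋃ σ ∈ {σ : List ℕ | σ ∈ T.carrier ∧ σ.length = n},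
            (fun k => σ ++ [k]) '' {k : ℕ | σ ++ [k] ∈ T.carrier} := by
        rintro τ ⟨hτ, hlen⟩
        have hne : τ ≠ [] := by intro h; simp [h] at hlen
        apply Set.mem_biUnion (x := τ.dropLast)
        · refine ⟨T.prefix_closed hτ (List.dropLast_prefix τ), ?_⟩
          simp [List.length_dropLast, hlen]
        · refine ⟨τ.getLast hne, ?_, List.dropLast_append_getLast hne⟩
          simpa [List.dropLast_append_getLast hne] using hτ
      exact Set.Finite.subset
        (Set.Finite.biUnion ih fun σ hσ => ((T.locallyFinite σ hσ.1).image _)) hsub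
  -- every level is nonempty
  have hlevelne : ∀ n : ℕ, {σ : List ℕ | σ ∈ T.carrier ∧ σ.length = n}.Nonempty := by
    intro n
    by_contra h
    rw [Set.not_nonempty_iff_eq_empty] at h
    have hsub : T.carrier ⊆ ⋃ k ∈ Set.Iio n, {σ : List ℕ | σ ∈ T.carrier ∧ σ.length = k} := by
      intro σ hσ
      by_cases hlt : σ.length < n
      · exact Set.mem_biUnion hlt ⟨hσ, rfl⟩
      · exfalso
        have : σ.take n ∈ {σ : List ℕ | σ ∈ T.carrier ∧ σ.length = n} :=
          ⟨T.prefix_closed hσ (List.take_prefix n σ), by simp [List.length_take]; omega⟩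
        simp [h] at this
    exact T.infinite (Set.Finite.subset
      (Set.Finite.biUnion (Set.finite_Iio n) fun k _ => hlevel k) hsub)
  have hlevelcard : ∀ n : ℕ, 1 ≤ T.levelCard n := by
    intro n
    haveI : Finite {σ : List ℕ // σ ∈ T.carrier ∧ σ.length = n} := (hlevel n).to_subtype
    haveI : Nonempty {σ : List ℕ // σ ∈ T.carrier ∧ σ.length = n} := (hlevelne n).to_subtype
    exact Nat.card_pos
  -- counting a level
  have hcount : ∀ (n : ℕ) (c : ℝ≥0∞),
      (∑' _ : {σ : List ℕ // σ ∈ T.carrier ∧ σ.length = n}, c) = (T.levelCard n : ℝ≥0∞) * c := by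
    intro n c
    haveI : Fintype {σ : List ℕ // σ ∈ T.carrier ∧ σ.length = n} := (hlevel n).fintype
    rw [tsum_fintype, Finset.sum_const, LFTree.levelCard, Nat.card_eq_fintype_card]
    simp [Finset.card_univ, nsmul_eq_mul]
  -- bounding a vertex sum by a level sum
  have hsum_vertex : ∀ b : ℝ≥0∞,
      (∑' v : T.Vertex, b ^ v.1.length) ≤ ∑' n : ℕ, (T.levelCard n : ℝ≥0∞) * b ^ n := by
    intro b
    have he : Function.Injective
        (fun v : T.Vertex => (⟨v.1.length, ⟨v.1, v.2.1, rfl⟩⟩ :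
          Σ n : ℕ, {σ : List ℕ // σ ∈ T.carrier ∧ σ.length = n})) := by
      intro v w h
      have := congrArg (fun p : (Σ n : ℕ, {σ : List ℕ // σ ∈ T.carrier ∧ σ.length = n}) =>
        p.2.1) h
      exact Subtype.ext this
    calc (∑' v : T.Vertex, b ^ v.1.length)
        = ∑' v : T.Vertex, (fun p : (Σ n : ℕ, {σ : List ℕ // σ ∈ T.carrier ∧ σ.length = n}) =>
            b ^ p.1) (⟨v.1.length, ⟨v.1, v.2.1, rfl⟩⟩) := rfl
      _ ≤ ∑' p : (Σ n : ℕ, {σ : List ℕ // σ ∈ T.carrier ∧ σ.length = n}), b ^ p.1 :=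
          ENNReal.tsum_comp_le_tsum_of_injective he _
      _ = ∑' (n : ℕ) (_ : {σ : List ℕ // σ ∈ T.carrier ∧ σ.length = n}), b ^ n :=
          ENNReal.tsum_sigma' _
      _ = ∑' n : ℕ, (T.levelCard n : ℝ≥0∞) * b ^ n := tsum_congr fun n => hcount n _
  -- pval is positive
  have hminmeas : Measurable fun ω => ENNReal.ofReal (min (A ω) 1) :=
    (hA.min measurable_const).ennreal_ofReal
  have hm0 : (0 : ℝ≥0∞) < ∫⁻ ω, ENNReal.ofReal (min (A ω) 1) ∂μ := by
    rw [pos_iff_ne_zero]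
    intro h
    have h0 := (lintegral_eq_zero_iff hminmeas).1 h
    obtain ⟨ω, hω1, hω2⟩ := (hApos.and h0).exists
    simp only [Pi.zero_apply, ENNReal.ofReal_eq_zero] at hω2
    have : (0 : ℝ) < min (A ω) 1 := lt_min hω1 one_pos
    linarith
  have hpval_le : ∀ y ∈ Set.Icc (0 : ℝ) 1,
      (∫⁻ ω, ENNReal.ofReal (min (A ω) 1) ∂μ) ≤ ∫⁻ ω, ENNReal.ofReal (A ω ^ y) ∂μ := by
    intro y hy
    apply lintegral_mono_ae
    filter_upwards [hApos] with ω hω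
    apply ENNReal.ofReal_le_ofReal
    have hmpos : (0 : ℝ) < min (A ω) 1 := lt_min hω one_pos
    calc min (A ω) 1 = min (A ω) 1 ^ (1 : ℝ) := (Real.rpow_one _).symm
      _ ≤ min (A ω) 1 ^ y :=
          Real.rpow_le_rpow_of_exponent_ge hmpos (min_le_right _ _) hy.2
      _ ≤ A ω ^ y := Real.rpow_le_rpow hmpos.le (min_le_left _ _) hy.1
  have hpval_pos : 0 < pval μ A :=
    lt_of_lt_of_le hm0 (le_iInf₂ hpval_le)
  -- limsup bounds
  have hL1 : (1 : ℝ≥0∞) ≤ L := by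
    apply Filter.le_limsup_of_frequently_le (Filter.Frequently.of_forall fun n => ?_)
    rcases Nat.eq_zero_or_pos n with rfl | hn
    · simp
    · refine ENNReal.one_le_rpow ?_ (by positivity)
      exact_mod_cast hlevelcard n
  have hL0 : L ≠ 0 := (lt_of_lt_of_le one_pos hL1).ne'
  have hLtop : L ≠ ∞ := by
    intro h
    rw [h, ENNReal.mul_top hpval_pos.ne'] at hgrowth
    exact (lt_irrefl _ (hgrowth.trans (by simp))).elim
  -- pick a good exponent x
  have hpv_lt : pval μ A < 1 / L :=
    (ENNReal.lt_div_iff_mul_lt (Or.inl hL0) (Or.inl hLtop)).2 hgrowth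
  obtain ⟨x, hx, hq⟩ : ∃ x ∈ Set.Icc (0 : ℝ) 1,
      (∫⁻ ω, ENNReal.ofReal (A ω ^ x) ∂μ) < 1 / L := by
    have := hpv_lt
    rw [pval, iInf_lt_iff] at this
    obtain ⟨x, hx'⟩ := this
    rw [iInf_lt_iff] at hx'
    obtain ⟨hx, h⟩ := hx'
    exact ⟨x, hx, h⟩
  set q := ∫⁻ ω, ENNReal.ofReal (A ω ^ x) ∂μ with hqdef
  have hqL : q * L < 1 := by
    rwa [ENNReal.lt_div_iff_mul_lt (Or.inl hL0) (Or.inl hLtop)] at hq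
  have hq0 : q ≠ 0 := (lt_of_lt_of_le hm0 (hpval_le x hx)).ne'
  have hq1 : q < 1 := lt_of_le_of_lt (le_mul_of_one_le_right' hL1) hqL
  have hq_top : q ≠ ∞ := (hq1.trans ENNReal.one_lt_top).ne
  obtain ⟨ρ, hρ1, hρ2⟩ := exists_between hqL
  have hLρ : L < ρ / q := by
    rw [ENNReal.lt_div_iff_mul_lt (Or.inl hq0) (Or.inl hq_top), mul_comm]
    exact hρ1
  have hev : ∀ᶠ n in Filter.atTop, (T.levelCard n : ℝ≥0∞) ^ ((n : ℝ)⁻¹) < ρ / q :=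
    Filter.eventually_lt_of_limsup_lt hLρ
  obtain ⟨N, hN⟩ := Filter.eventually_atTop.1 (hev.and (Filter.eventually_ge_atTop 1))
  have hkey : ∀ n, N ≤ n → (T.levelCard n : ℝ≥0∞) * q ^ n ≤ ρ ^ n := by
    intro n hn
    obtain ⟨h1, h2⟩ := hN n hn
    have hMn : (T.levelCard n : ℝ≥0∞) ≤ (ρ / q) ^ n := by
      have h3 := pow_le_pow_left' h1.le n
      rwa [← ENNReal.rpow_natCast ((T.levelCard n : ℝ≥0∞) ^ ((n : ℝ)⁻¹)) n,
        ← ENNReal.rpow_mul, inv_mul_cancel₀ (by exact_mod_cast (by omega : n ≠ 0)),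
        ENNReal.rpow_one] at h3
    calc (T.levelCard n : ℝ≥0∞) * q ^ n ≤ (ρ / q) ^ n * q ^ n := mul_le_mul_left hMn _
      _ = ρ ^ n := by rw [← mul_pow, ENNReal.div_mul_cancel hq0 hq_top]
  have hsum_n : (∑' n : ℕ, (T.levelCard n : ℝ≥0∞) * q ^ n) < ∞ := by
    rw [← Summable.sum_add_tsum_nat_add' (f := fun n => (T.levelCard n : ℝ≥0∞) * q ^ n)
      (k := N) ENNReal.summable]
    refine ENNReal.add_lt_top.2 ⟨?_, ?_⟩
    · refine ENNReal.sum_lt_top.2 fun n _ => ?_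
      exact ENNReal.mul_lt_top (ENNReal.natCast_lt_top _) (ENNReal.pow_lt_top (n := n) hq_top.lt_top)
    · calc (∑' n : ℕ, (T.levelCard (n + N) : ℝ≥0∞) * q ^ (n + N))
          ≤ ∑' n : ℕ, ρ ^ (n + N) :=
            ENNReal.tsum_le_tsum fun n => hkey (n + N) (Nat.le_add_left N n)
        _ ≤ ∑' n : ℕ, ρ ^ n :=
            ENNReal.tsum_comp_le_tsum_of_injective (add_left_injective N) fun n => ρ ^ n
        _ = (1 - ρ)⁻¹ := ENNReal.tsum_geometric ρ
        _ < ∞ := ENNReal.inv_lt_top.2 (tsub_pos_of_lt hρ2)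
  have hq_sum : (∑' v : T.Vertex, q ^ v.1.length) < ∞ :=
    lt_of_le_of_lt (hsum_vertex q) hsum_n
  have hpval_le_q : pval μ A ≤ q := iInf₂_le x hx
  haveI : Countable T.Vertex :=
    inferInstanceAs (Countable {σ : List ℕ // σ ∈ T.carrier ∧ σ ≠ []})
  refine ⟨lt_of_le_of_lt (ENNReal.tsum_le_tsum fun v => pow_le_pow_left' hpval_le_q _)
    hq_sum, ?_⟩
  -- a.s. positivity of all the A_σ
  have hApos' : ∀ v : T.Vertex, ∀ᵐ ω ∂μ, 0 < Aσ v.1 ω := by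
    intro v
    have hmap := (hid v).map_eq
    rw [ae_iff]
    have h1 : {ω | ¬0 < Aσ v.1 ω} = Aσ v.1 ⁻¹' Set.Iic 0 := by ext ω; simp [not_lt]
    have h2 : A ⁻¹' Set.Iic 0 = {ω | ¬0 < A ω} := by ext ω; simp [not_lt]
    rw [h1, ← Measure.map_apply (hmeas v) measurableSet_Iic, hmap,
      Measure.map_apply hA measurableSet_Iic, h2, ← ae_iff]
    exact hApos
  have hposall : ∀ᵐ ω ∂μ, ∀ v : T.Vertex, 0 < Aσ v.1 ω := ae_all_iff.2 hApos'
  -- the independent ℝ≥0∞-valued family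
  set g : T.Vertex → Ω → ℝ≥0∞ := fun v ω => ENNReal.ofReal (Aσ v.1 ω) ^ x with hgdef
  have hgmeas : ∀ v, Measurable (g v) := fun v =>
    ENNReal.continuous_rpow_const.measurable.comp (hmeas v).ennreal_ofReal
  have hgind : iIndepFun g μ :=
    hind.comp (fun _ => fun a : ℝ => ENNReal.ofReal a ^ x)
      (fun _ => ENNReal.continuous_rpow_const.measurable.comp ENNReal.measurable_ofReal)
  have hgint : ∀ v : T.Vertex, ∫⁻ ω, g v ω ∂μ = q := by
    intro v
    have h1 : IdentDistrib (g v) (fun ω => ENNReal.ofReal (A ω) ^ x) μ μ :=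
      (hid v).comp
        (ENNReal.continuous_rpow_const.measurable.comp ENNReal.measurable_ofReal)
    rw [h1.lintegral_eq]
    apply lintegral_congr_ae
    filter_upwards [hApos] with ω hω
    exact ENNReal.ofReal_rpow_of_pos hω
  -- vertices along a path
  have hvtx : ∀ (v : T.Vertex) (i : ℕ),
      v.1.take (i + 1) ∈ T.carrier ∧ v.1.take (i + 1) ≠ [] := by
    intro v i
    refine ⟨T.prefix_closed v.2.1 (List.take_prefix _ _), fun h => ?_⟩
    have h1 := congrArg List.length h
    have h2 : v.1.length ≠ 0 := fun hh => v.2.2 (List.length_eq_zero_iff.1 hh)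
    rw [List.length_take, List.length_nil] at h1
    omega
  set vtx : T.Vertex → ℕ → T.Vertex := fun v i => ⟨v.1.take (i + 1), hvtx v i⟩ with hvtxdef
  set F : T.Vertex → Ω → ℝ≥0∞ :=
    fun v ω => ∏ i ∈ Finset.range v.1.length, g (vtx v i) ω with hFdef
  have hFmeas : ∀ v, Measurable (F v) := fun v =>
    Finset.measurable_prod _ fun i _ => hgmeas _
  have hFint : ∀ v : T.Vertex, ∫⁻ ω, F v ω ∂μ = q ^ v.1.length := by
    intro v
    have hinj : ∀ i ∈ Finset.range v.1.length, ∀ j ∈ Finset.range v.1.length,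
        vtx v i = vtx v j → i = j := by
      intro i hi j hj hij
      have h1 : (vtx v i).1.length = (vtx v j).1.length := by rw [hij]
      simp only [hvtxdef, List.length_take] at h1
      rw [Finset.mem_range] at hi hj
      omega
    have h1 : ∀ ω, F v ω = ∏ u ∈ (Finset.range v.1.length).image (vtx v), g u ω := by
      intro ω
      simp only [hFdef]
      exact (Finset.prod_image (f := fun u => g u ω) hinj).symm
    calc ∫⁻ ω, F v ω ∂μ
        = ∫⁻ ω, ∏ u ∈ (Finset.range v.1.length).image (vtx v), g u ω ∂μ :=
          lintegral_congr h1
      _ = ∏ u ∈ (Finset.range v.1.length).image (vtx v), ∫⁻ ω, g u ω ∂μ :=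
          lintegral_finset_prod_of_iIndep hgind hgmeas _
      _ = ∏ _u ∈ (Finset.range v.1.length).image (vtx v), q :=
          Finset.prod_congr rfl fun u _ => hgint u
      _ = q ^ ((Finset.range v.1.length).image (vtx v)).card := Finset.prod_const q
      _ = q ^ v.1.length := by rw [Finset.card_image_of_injOn hinj, Finset.card_range]
  have hFsum : (∫⁻ ω, ∑' v : T.Vertex, F v ω ∂μ) < ∞ := by
    rw [lintegral_tsum fun v => (hFmeas v).aemeasurable]
    calc (∑' v : T.Vertex, ∫⁻ ω, F v ω ∂μ) = ∑' v : T.Vertex, q ^ v.1.length :=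
          tsum_congr hFint
      _ < ∞ := hq_sum
  have hae1 : ∀ᵐ ω ∂μ, (∑' v : T.Vertex, F v ω) < ∞ :=
    ae_lt_top (Measurable.ennreal_tsum hFmeas) hFsum.ne
  filter_upwards [hae1, hposall] with ω hω1 hω2
  set c : T.Vertex → ℝ≥0∞ := fun v => ENNReal.ofReal (cumul Aσ v.1 ω) with hcdef
  have hcF : ∀ v, c v ^ x = F v ω := by
    intro v
    have h1 : c v = ∏ i ∈ Finset.range v.1.length,
        ENNReal.ofReal (Aσ (v.1.take (i + 1)) ω) := by
      simp only [hcdef]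
      exact ENNReal.ofReal_prod_of_nonneg fun i _ => (hω2 (vtx v i)).le
    rw [h1, ← ENNReal.prod_rpow_of_nonneg hx.1]
  have hsx : (∑' v : T.Vertex, c v ^ x) ≠ ∞ := by
    rw [tsum_congr hcF]
    exact hω1.ne
  have hfin : {v : T.Vertex | 1 ≤ c v ^ x}.Finite :=
    ENNReal.finite_const_le_of_tsum_ne_top hsx one_ne_zero
  have hle : ∀ v, c v ≤ c v ^ x + Set.indicator {v : T.Vertex | 1 ≤ c v ^ x} c v := by
    intro v
    by_cases hv : 1 ≤ c v ^ x
    · rw [Set.indicator_of_mem (show v ∈ {v : T.Vertex | 1 ≤ c v ^ x} from hv) c]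
      exact le_add_self
    · rw [Set.indicator_of_notMem (show v ∉ {v : T.Vertex | 1 ≤ c v ^ x} from hv) c,
        add_zero]
      have hc1 : c v ≤ 1 := by
        by_contra h
        push_neg at h
        refine hv ?_
        calc (1 : ℝ≥0∞) = 1 ^ x := (ENNReal.one_rpow x).symm
          _ ≤ c v ^ x := ENNReal.rpow_le_rpow h.le hx.1
      calc c v = c v ^ (1 : ℝ) := (ENNReal.rpow_one _).symm
        _ ≤ c v ^ x := ENNReal.rpow_le_rpow_of_exponent_ge hc1 hx.2
  have hind_sum : (∑' v : T.Vertex, Set.indicator {v : T.Vertex | 1 ≤ c v ^ x} c v) < ∞ := by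
    rw [tsum_eq_sum (s := hfin.toFinset) fun v hv =>
      Set.indicator_of_notMem (by simpa [Set.Finite.mem_toFinset] using hv) c]
    refine ENNReal.sum_lt_top.2 fun v _ => ?_
    exact lt_of_le_of_lt (Set.indicator_le_self _ _ v) ENNReal.ofReal_lt_top
  calc (∑' v : T.Vertex, c v)
      ≤ ∑' v : T.Vertex, (c v ^ x + Set.indicator {v : T.Vertex | 1 ≤ c v ^ x} c v) :=
        ENNReal.tsum_le_tsum hle
    _ = (∑' v : T.Vertex, c v ^ x)
        + ∑' v : T.Vertex, Set.indicator {v : T.Vertex | 1 ≤ c v ^ x} c v :=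
        ENNReal.tsum_add
    _ < ∞ := ENNReal.add_lt_top.2 ⟨hsx.lt_top, hind_sum⟩
end
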